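/- arXiv:2605.20854 — 7 statements merged into one kernel-verified Lean document; each statement's English description precedes it below -/
import Mathlib

section
/- Let K ≥ 1 and M ≥ 2 be integers, and let Π be a probability measure on ℝ^K such that θ ↦ max_{i∈[K]} |θ_i| is Π-integrable. For π in the probability simplex Δ^{K-1} define J(π) := E_{θ∼Π}[ Σ_{a∈[K]^M} (∏_{m=1}^M π_{a_m}) · max_{m∈[M]} θ_{a_m} ] and, for each arm i, the posterior-averaged marginal expected improvement s̄_i(π) := E_{θ∼Π}[ Σ_{a∈[K]^{M−1}} (∏_{m=1}^{M−1} π_{a_m}) · max(θ_i − max_{m∈[M−1]} θ_{a_m}, 0) ]. If π* maximizes J over Δ^{K-1}, then: (1) for all arms i, j with π*_i > 0 and π*_j > 0, s̄_i(π*) = s̄_j(π*); (2) for all arms j, k with π*_j > 0 and π*_k = 0, s̄_j(π*) ≥ s̄_k(π*). -/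
open MeasureTheory

open Finset

/-- The ReMax objective: posterior expected maximum reward over `M` virtual draws
from the sampling distribution `π`, where repeated occurrences of the same arm
reuse the same posterior sample. -/
noncomputable def remaxJ (K M : ℕ) (P : Measure (Fin K → ℝ)) (π : Fin K → ℝ) : ℝ :=
  ∫ θ, ∑ a : Fin M → Fin K, (∏ m, π (a m)) * (⨆ m, θ (a m)) ∂P

/-- The posterior-averaged marginal expected improvement of arm `i`. -/
noncomputable def remaxSbar (K M : ℕ) (P : Measure (Fin K → ℝ)) (π : Fin K → ℝ)
    (i : Fin K) : ℝ :=
  ∫ θ, ∑ a : Fin (M - 1) → Fin K,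
      (∏ m, π (a m)) * max (θ i - ⨆ m, θ (a m)) 0 ∂P

lemma ciSup_comp_equiv {α β : Type*} (f : α → ℝ) (e : β ≃ α) :
    ⨆ b, f (e b) = ⨆ a, f a := by
  simp only [iSup]
  congr 1
  exact e.surjective.range_comp f

lemma ciSup_fin_snoc {n : ℕ} (hn : 0 < n) (g : Fin (n + 1) → ℝ) :
    ⨆ m, g m = max (⨆ m : Fin n, g m.castSucc) (g (Fin.last n)) := by
  haveI : Nonempty (Fin n) := Fin.pos_iff_nonempty.mp hn
  apply le_antisymm
  · apply ciSup_le
    intro m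
    induction m using Fin.lastCases with
    | last => exact le_max_right _ _
    | cast m =>
        exact le_max_of_le_left (le_ciSup (Set.Finite.bddAbove (Set.finite_range (fun m : Fin n => g m.castSucc))) m)
  · exact max_le (ciSup_le fun m => le_ciSup (Set.Finite.bddAbove (Set.finite_range g)) m.castSucc)
      (le_ciSup (Set.Finite.bddAbove (Set.finite_range g)) (Fin.last n))

lemma measurable_ciSup_comp {K n : ℕ} (hn : 0 < n) (a : Fin n → Fin K) :
    Measurable (fun θ : Fin K → ℝ => ⨆ m, θ (a m)) := by
  haveI : Nonempty (Fin n) := Fin.pos_iff_nonempty.mp hn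
  have h : (fun θ : Fin K → ℝ => ⨆ m, θ (a m))
      = Finset.univ.sup' Finset.univ_nonempty (fun (m : Fin n) (θ : Fin K → ℝ) => θ (a m)) := by
    funext θ
    rw [Finset.sup'_apply]
    exact (Finset.sup'_univ_eq_ciSup _).symm
  rw [h]
  exact Finset.measurable_sup' _ fun m _ => measurable_pi_apply (a m)

lemma integrable_ciSup_comp {K n : ℕ} (hK : 0 < K) {P : Measure (Fin K → ℝ)}
    (hInt : Integrable (fun θ : Fin K → ℝ => ⨆ i, |θ i|) P)
    (hn : 0 < n) (a : Fin n → Fin K) :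
    Integrable (fun θ : Fin K → ℝ => ⨆ m, θ (a m)) P := by
  haveI : Nonempty (Fin n) := Fin.pos_iff_nonempty.mp hn
  haveI : Nonempty (Fin K) := Fin.pos_iff_nonempty.mp hK
  refine hInt.mono (measurable_ciSup_comp hn a).aestronglyMeasurable
    (Filter.Eventually.of_forall fun θ => ?_)
  rw [Real.norm_eq_abs, Real.norm_eq_abs]
  refine le_trans (abs_le.mpr ⟨?_, ?_⟩) (le_abs_self _)
  · set c := Classical.arbitrary (Fin n)
    refine le_trans ?_ (le_ciSup (Set.Finite.bddAbove (Set.finite_range _)) c)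
    refine le_trans (neg_le_neg (le_ciSup (Set.Finite.bddAbove (Set.finite_range _)) (a c))) ?_
    exact neg_abs_le _
  · exact ciSup_le fun m =>
      le_trans (le_abs_self _) (le_ciSup (Set.Finite.bddAbove (Set.finite_range (fun i => |θ i|))) (a m))


noncomputable def Cmax {K n : ℕ} (P : Measure (Fin K → ℝ)) (a : Fin n → Fin K) : ℝ :=
  ∫ θ, ⨆ m, θ (a m) ∂P

lemma Cmax_comp_perm {K n : ℕ} (P : Measure (Fin K → ℝ)) (a : Fin n → Fin K)
    (σ : Equiv.Perm (Fin n)) : Cmax P (a ∘ σ) = Cmax P a := by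
  unfold Cmax
  have h : (fun θ : Fin K → ℝ => ⨆ m, θ ((a ∘ σ) m)) = fun θ => ⨆ m, θ (a m) := by
    funext θ
    exact ciSup_comp_equiv (fun m => θ (a m)) σ
  rw [h]

lemma remaxJ_eq {K n : ℕ} (hK : 0 < K) (hn : 0 < n) (P : Measure (Fin K → ℝ))
    (hInt : Integrable (fun θ : Fin K → ℝ => ⨆ i, |θ i|) P) (w : Fin K → ℝ) :
    remaxJ K n P w = ∑ a : Fin n → Fin K, (∏ m, w (a m)) * Cmax P a := by
  rw [remaxJ, integral_finset_sum _ fun a _ =>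
    ((integrable_ciSup_comp hK hInt hn a).const_mul _)]
  exact Finset.sum_congr rfl fun a _ => integral_const_mul _ _

lemma remaxSbar_eq {K n : ℕ} (hK : 0 < K) (hn : 0 < n) (P : Measure (Fin K → ℝ))
    (hInt : Integrable (fun θ : Fin K → ℝ => ⨆ i, |θ i|) P) (w : Fin K → ℝ) (i : Fin K) :
    remaxSbar K (n + 1) P w i
      = ∑ b : Fin n → Fin K, (∏ m, w (b m)) * (Cmax P (Fin.snoc b i) - Cmax P b) := by
  have hint1 : ∀ a : Fin (n + 1) → Fin K,
      Integrable (fun θ : Fin K → ℝ => ⨆ m, θ (a m)) P :=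
    fun a => integrable_ciSup_comp hK hInt (Nat.succ_pos n) a
  have hint2 : ∀ b : Fin n → Fin K, Integrable (fun θ : Fin K → ℝ => ⨆ m, θ (b m)) P :=
    fun b => integrable_ciSup_comp hK hInt hn b
  have key : ∀ (θ : Fin K → ℝ) (b : Fin n → Fin K),
      max (θ i - ⨆ m, θ (b m)) 0 = (⨆ m, θ ((Fin.snoc b i : Fin (n+1) → Fin K) m)) - ⨆ m, θ (b m) := by
    intro θ b
    rw [ciSup_fin_snoc hn]
    simp only [Fin.snoc_castSucc, Fin.snoc_last]
    rcases le_total (θ i) (⨆ m, θ (b m)) with h | h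
    · rw [max_eq_right (sub_nonpos.mpr h), max_eq_left h, sub_self]
    · rw [max_eq_left (sub_nonneg.mpr h), max_eq_right h]
  have h2 : (fun θ : Fin K → ℝ =>
        ∑ b : Fin n → Fin K, (∏ m, w (b m)) * max (θ i - ⨆ m, θ (b m)) 0)
      = fun θ => ∑ b : Fin n → Fin K,
          (∏ m, w (b m)) * ((⨆ m, θ ((Fin.snoc b i : Fin (n+1) → Fin K) m)) - ⨆ m, θ (b m)) := by
    funext θ
    exact Finset.sum_congr rfl fun b _ => by rw [key θ b]
  rw [remaxSbar]
  show (∫ θ, ∑ b : Fin n → Fin K, (∏ m, w (b m)) * max (θ i - ⨆ m, θ (b m)) 0 ∂P) = _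
  rw [h2, integral_finset_sum]
  · refine Finset.sum_congr rfl fun b _ => ?_
    rw [integral_const_mul, integral_sub (hint1 (Fin.snoc b i)) (hint2 b)]
    rfl
  · intro b _
    exact ((hint1 (Fin.snoc b i)).sub (hint2 b)).const_mul _


lemma hasDerivAt_poly {K n : ℕ} (C : (Fin n → Fin K) → ℝ) (π v : Fin K → ℝ) :
    HasDerivAt (fun t : ℝ => ∑ a : Fin n → Fin K, (∏ m, (π (a m) + t * v (a m))) * C a)
      (∑ a : Fin n → Fin K,
        (∑ m, (∏ m' ∈ Finset.univ.erase m, π (a m')) * v (a m)) * C a) 0 := by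
  apply HasDerivAt.fun_sum
  intro a _
  have h1 : ∀ m : Fin n, HasDerivAt (fun t : ℝ => π (a m) + t * v (a m)) (v (a m)) 0 := by
    intro m
    simpa using ((hasDerivAt_id (0 : ℝ)).mul_const (v (a m))).const_add (π (a m))
  have h2 := (HasDerivAt.finset_prod (u := Finset.univ) (fun m _ => h1 m)).mul_const (C a)
  simpa [smul_eq_mul, mul_comm] using h2

lemma erase_image_perm {α : Type*} [DecidableEq α] [Fintype α] (σ : Equiv.Perm α) (x : α) :
    (Finset.univ.erase x).image σ = Finset.univ.erase (σ x) := by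
  ext y
  simp only [Finset.mem_image, Finset.mem_erase, Finset.mem_univ, and_true]
  constructor
  · rintro ⟨z, hz, rfl⟩
    exact fun h => hz (σ.injective h)
  · intro h
    exact ⟨σ.symm y, fun hc => h (by rw [← hc, Equiv.apply_symm_apply]),
      Equiv.apply_symm_apply _ _⟩

lemma prod_erase_last {n : ℕ} (g : Fin (n + 1) → ℝ) :
    ∏ m ∈ Finset.univ.erase (Fin.last n), g m = ∏ m : Fin n, g m.castSucc := by
  have h : Finset.univ.erase (Fin.last n) = Finset.univ.map Fin.castSuccEmb := by
    rw [← Fin.Iio_last_eq_map]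
    ext y
    rw [Finset.mem_erase, Finset.mem_Iio, Fin.lt_last_iff_ne_last]
    simp
  rw [h, Finset.prod_map]
  rfl

lemma sum_fn_snoc {K n : ℕ} (F : (Fin (n + 1) → Fin K) → ℝ) :
    ∑ a : Fin (n + 1) → Fin K, F a
      = ∑ x : Fin K, ∑ b : Fin n → Fin K, F (Fin.snoc b x) := by
  rw [← Equiv.sum_comp (Fin.snocEquiv fun _ => Fin K) F, Fintype.sum_prod_type]
  refine Finset.sum_congr rfl fun x _ => Finset.sum_congr rfl fun b _ => ?_
  congr 1

lemma deriv_symm {K n : ℕ} (P : Measure (Fin K → ℝ)) (π v : Fin K → ℝ) :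
    ∑ a : Fin (n + 1) → Fin K,
        (∑ m, (∏ m' ∈ Finset.univ.erase m, π (a m')) * v (a m)) * Cmax P a
      = (n + 1 : ℝ) * ∑ x : Fin K, v x *
          ∑ b : Fin n → Fin K, (∏ m, π (b m)) * Cmax P (Fin.snoc b x) := by
  have hbij : ∀ σ : Equiv.Perm (Fin (n + 1)),
      Function.Bijective (fun a : Fin (n + 1) → Fin K => a ∘ σ) := by
    intro σ
    constructor
    · intro a b h
      funext x
      have := congrFun h (σ.symm x)
      simpa using this
    · intro a
      exact ⟨a ∘ σ.symm, funext fun x => by simp⟩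
  have step1 : ∀ m : Fin (n + 1),
      (∑ a : Fin (n + 1) → Fin K,
        ((∏ m' ∈ Finset.univ.erase (Fin.last n), π (a m')) * v (a (Fin.last n))) * Cmax P a)
      = ∑ a : Fin (n + 1) → Fin K,
        ((∏ m' ∈ Finset.univ.erase m, π (a m')) * v (a m)) * Cmax P a := by
    intro m
    set σ := Equiv.swap m (Fin.last n) with hσ
    refine Fintype.sum_bijective (fun a : Fin (n + 1) → Fin K => a ∘ σ) (hbij σ) _ _ fun a => ?_
    have hprod : ∏ m' ∈ Finset.univ.erase m, π ((a ∘ σ) m')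
        = ∏ m' ∈ Finset.univ.erase (Fin.last n), π (a m') := by
      have : Finset.univ.erase (Fin.last n) = (Finset.univ.erase m).image σ := by
        rw [erase_image_perm σ m, hσ, Equiv.swap_apply_left]
      rw [this, Finset.prod_image fun x _ y _ h => σ.injective h]
      rfl
    have hv : (a ∘ σ) m = a (Fin.last n) := by
      simp [hσ, Equiv.swap_apply_left]
    show (∏ m' ∈ Finset.univ.erase (Fin.last n), π (a m')) * v (a (Fin.last n)) * Cmax P a
        = (∏ m' ∈ Finset.univ.erase m, π ((a ∘ σ) m')) * v ((a ∘ σ) m) * Cmax P (a ∘ σ)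
    rw [Cmax_comp_perm P a σ, hprod, hv]
  have step2 : ∑ a : Fin (n + 1) → Fin K,
        (∑ m, (∏ m' ∈ Finset.univ.erase m, π (a m')) * v (a m)) * Cmax P a
      = ∑ m : Fin (n + 1), ∑ a : Fin (n + 1) → Fin K,
          ((∏ m' ∈ Finset.univ.erase m, π (a m')) * v (a m)) * Cmax P a := by
    rw [Finset.sum_comm]
    exact Finset.sum_congr rfl fun a _ => by rw [Finset.sum_mul]
  rw [step2]
  have step3 : ∀ m : Fin (n + 1), ∑ a : Fin (n + 1) → Fin K,
        ((∏ m' ∈ Finset.univ.erase m, π (a m')) * v (a m)) * Cmax P a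
      = ∑ x : Fin K, v x *
          ∑ b : Fin n → Fin K, (∏ m, π (b m)) * Cmax P (Fin.snoc b x) := by
    intro m
    rw [← step1 m, sum_fn_snoc]
    refine Finset.sum_congr rfl fun x _ => ?_
    rw [Finset.mul_sum]
    refine Finset.sum_congr rfl fun b _ => ?_
    rw [prod_erase_last]
    simp only [Fin.snoc_castSucc, Fin.snoc_last]
    ring
  rw [Finset.sum_congr rfl fun m _ => step3 m, Finset.sum_const, Finset.card_univ,
    Fintype.card_fin, nsmul_eq_mul]
  push_cast
  ring



/-- Expected-improvement balance condition at a maximizer of the ReMax objective: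
all arms in the support have equal posterior-averaged marginal expected improvement,
and arms outside the support have no larger one. -/
theorem remax_expected_improvement_balance
    (K M : ℕ) (hK : 1 ≤ K) (hM : 2 ≤ M)
    (P : Measure (Fin K → ℝ)) [IsProbabilityMeasure P]
    (hInt : Integrable (fun θ : Fin K → ℝ => ⨆ i, |θ i|) P)
    (π : Fin K → ℝ) (hπ0 : ∀ i, 0 ≤ π i) (hπ1 : ∑ i, π i = 1)
    (hmax : ∀ π' : Fin K → ℝ, (∀ i, 0 ≤ π' i) → (∑ i, π' i = 1) →
      remaxJ K M P π' ≤ remaxJ K M P π) :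
    (∀ i j : Fin K, 0 < π i → 0 < π j →
      remaxSbar K M P π i = remaxSbar K M P π j) ∧
    (∀ j k : Fin K, 0 < π j → π k = 0 →
      remaxSbar K M P π k ≤ remaxSbar K M P π j) := by
  obtain ⟨N, rfl⟩ : ∃ N, M = N + 1 := ⟨M - 1, by omega⟩
  have hN : 0 < N := by omega
  have hK0 : 0 < K := hK
  set S : Fin K → ℝ :=
    fun x => ∑ b : Fin N → Fin K, (∏ m, π (b m)) * Cmax P (Fin.snoc b x) with hS
  have hSbar : ∀ x, remaxSbar K (N + 1) P π x
      = S x - ∑ b : Fin N → Fin K, (∏ m, π (b m)) * Cmax P b := by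
    intro x
    rw [remaxSbar_eq hK0 hN P hInt π x, hS]
    simp only [mul_sub]
    rw [Finset.sum_sub_distrib]
  have key : ∀ i j : Fin K, 0 < π i → S j ≤ S i := by
    intro i j hi
    rcases eq_or_ne j i with rfl | hij
    · exact le_refl _
    set v : Fin K → ℝ :=
      fun x => (if x = j then (1 : ℝ) else 0) - (if x = i then (1 : ℝ) else 0) with hv
    set f : ℝ → ℝ :=
      fun t => ∑ a : Fin (N + 1) → Fin K, (∏ m, (π (a m) + t * v (a m))) * Cmax P a with hf
    have hD : HasDerivAt f
        (∑ a : Fin (N + 1) → Fin K,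
          (∑ m, (∏ m' ∈ Finset.univ.erase m, π (a m')) * v (a m)) * Cmax P a) 0 :=
      hasDerivAt_poly (Cmax P) π v
    have hDval : (∑ a : Fin (N + 1) → Fin K,
          (∑ m, (∏ m' ∈ Finset.univ.erase m, π (a m')) * v (a m)) * Cmax P a)
        = (N + 1 : ℝ) * (S j - S i) := by
      rw [deriv_symm P π v]
      congr 1
      have hvs : ∑ x : Fin K, v x *
          (∑ b : Fin N → Fin K, (∏ m, π (b m)) * Cmax P (Fin.snoc b x))
          = S j - S i := by
        simp only [hv, sub_mul, one_mul, zero_mul, ite_mul, Finset.sum_sub_distrib,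
          Finset.sum_ite_eq', Finset.mem_univ, if_true]
        rfl
      rw [hvs]
    have hsum_v : ∑ x, v x = 0 := by
      simp [hv, Finset.sum_sub_distrib]
    have hmono : ∀ t ∈ Set.Ioc (0 : ℝ) (π i), f t ≤ f 0 := by
      intro t ht
      have h0 : f 0 = remaxJ K (N + 1) P π := by
        rw [hf, remaxJ_eq hK0 (Nat.succ_pos N) P hInt π]
        simp
      have h1 : f t = remaxJ K (N + 1) P (fun x => π x + t * v x) := by
        rw [hf, remaxJ_eq hK0 (Nat.succ_pos N) P hInt (fun x => π x + t * v x)]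
      rw [h0, h1]
      refine hmax _ (fun x => ?_) ?_
      · rcases eq_or_ne x j with rfl | hxj
        · have : v x = 1 := by simp [hv, hij]
          rw [this]
          have := hπ0 x
          nlinarith [ht.1.le]
        · rcases eq_or_ne x i with rfl | hxi
          · have : v x = -1 := by simp [hv, hij.symm]
            rw [this]
            have := ht.2
            nlinarith
          · have : v x = 0 := by simp [hv, hxj, hxi]
            rw [this]
            simpa using hπ0 x
      · rw [Finset.sum_add_distrib, hπ1, ← Finset.mul_sum, hsum_v]
        ring
    have hD0 : (∑ a : Fin (N + 1) → Fin K,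
          (∑ m, (∏ m' ∈ Finset.univ.erase m, π (a m')) * v (a m)) * Cmax P a) ≤ 0 := by
      have htend := hasDerivAt_iff_tendsto_slope.mp hD
      have htend' : Filter.Tendsto (slope f 0) (nhdsWithin 0 (Set.Ioi 0)) (nhds _) :=
        htend.mono_left (nhdsWithin_mono 0 (fun x hx => ne_of_gt hx))
      refine le_of_tendsto htend' ?_
      filter_upwards [Ioc_mem_nhdsGT_of_mem (Set.left_mem_Ico.mpr hi)] with t ht
      rw [slope_def_field]
      rw [sub_zero]
      exact div_nonpos_of_nonpos_of_nonneg (sub_nonpos.mpr (hmono t ht)) ht.1.le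
    have hNpos : (0 : ℝ) < (N : ℝ) + 1 := by positivity
    nlinarith [hDval ▸ hD0]
  constructor
  · intro i j hi hj
    rw [hSbar i, hSbar j]
    have h1 := key i j hi
    have h2 := key j i hj
    have : S i = S j := le_antisymm h2 h1
    rw [this]
  · intro j k hj hk
    rw [hSbar j, hSbar k]
    have := key j k hj
    linarith
end

section
/- Let K ≥ 1 and M ≥ 2 be integers, and let Π be a probability measure on ℝ^K such that θ ↦ max_{i∈[K]} |θ_i| is Π-integrable. Define the polynomial function J on ℝ^K by J(π) := E_{θ∼Π}[ Σ_{a∈[K]^M} (∏_{m=1}^M π_{a_m}) · max_{m∈[M]} θ_{a_m} ]. Then for every π in the probability simplex Δ^{K-1} and every arm i, the partial derivative of J with respect to π_i satisfies ∂J(π)/∂π_i = M · ( s̄_i(π) + C(π) ), where s̄_i(π) := E_{θ∼Π}[ Σ_{a∈[K]^{M−1}} (∏_{m=1}^{M−1} π_{a_m}) · max(θ_i − max_{m∈[M−1]} θ_{a_m}, 0) ] and C(π) := E_{θ∼Π}[ Σ_{a∈[K]^{M−1}} (∏_{m=1}^{M−1} π_{a_m}) · max_{m∈[M−1]} θ_{a_m}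 ]. -/
open MeasureTheory

/-- The arm-independent constant: posterior-averaged expected maximum over `M - 1` draws. -/
noncomputable def remaxC (K M : ℕ) (P : Measure (Fin K → ℝ)) (π : Fin K → ℝ) : ℝ :=
  ∫ θ, ∑ a : Fin (M - 1) → Fin K,
      (∏ m, π (a m)) * (⨆ m, θ (a m)) ∂P

open Finset in
lemma fin_prod_erase {M₀ : Type*} [CommMonoid M₀] {n : ℕ} (g : Fin (n+1) → M₀) (m : Fin (n+1)) :
    ∏ m' ∈ univ.erase m, g m' = ∏ j, g (m.succAbove j) := by
  rw [← Finset.compl_singleton, ← Fin.image_succAbove_univ,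
    Finset.prod_image (fun x _ y _ h => m.succAbove_right_injective h)]

lemma ciSup_succAbove {n : ℕ} [Nonempty (Fin n)] (f : Fin (n+1) → ℝ) (m : Fin (n+1)) :
    (⨆ m', f m') = max (f m) (⨆ j, f (m.succAbove j)) := by
  have bdd : BddAbove (Set.range f) := (Set.finite_range f).bddAbove
  have bdd2 : BddAbove (Set.range fun j => f (m.succAbove j)) := (Set.finite_range _).bddAbove
  apply le_antisymm
  · refine ciSup_le fun m' => ?_
    rcases eq_or_ne m' m with rfl | h
    · exact le_max_left _ _
    · obtain ⟨j, rfl⟩ := Fin.exists_succAbove_eq h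
      exact le_trans (le_ciSup bdd2 j) (le_max_right _ _)
  · exact max_le (le_ciSup bdd m) (ciSup_le fun j => le_ciSup bdd (m.succAbove j))

lemma abs_sup_le {K n : ℕ} [Nonempty (Fin n)] (θ : Fin K → ℝ) (a : Fin n → Fin K) :
    |⨆ m, θ (a m)| ≤ ⨆ j, |θ j| := by
  have bddA : BddAbove (Set.range fun j => |θ j|) := (Set.finite_range _).bddAbove
  have bdd : BddAbove (Set.range fun m => θ (a m)) := (Set.finite_range _).bddAbove
  refine abs_le.2 ⟨?_, ciSup_le fun m => (le_abs_self _).trans (le_ciSup bddA (a m))⟩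
  obtain ⟨m₀⟩ := ‹Nonempty (Fin n)›
  calc -(⨆ j, |θ j|) ≤ -|θ (a m₀)| := neg_le_neg (le_ciSup bddA (a m₀))
  _ ≤ θ (a m₀) := neg_abs_le _
  _ ≤ ⨆ m, θ (a m) := le_ciSup bdd m₀

lemma integrable_sup {K n : ℕ} [Nonempty (Fin n)] {P : Measure (Fin K → ℝ)}
    (hInt : Integrable (fun θ : Fin K → ℝ => ⨆ j, |θ j|) P) (a : Fin n → Fin K) :
    Integrable (fun θ : Fin K → ℝ => ⨆ m, θ (a m)) P := by
  refine hInt.mono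
    ((Measurable.iSup fun m => measurable_pi_apply (a m)).aestronglyMeasurable)
    (ae_of_all _ fun θ => ?_)
  rw [Real.norm_eq_abs, Real.norm_eq_abs]
  exact (abs_sup_le θ a).trans (le_abs_self _)

lemma integrable_max_sup {K n : ℕ} [Nonempty (Fin n)] {P : Measure (Fin K → ℝ)}
    (hInt : Integrable (fun θ : Fin K → ℝ => ⨆ j, |θ j|) P) (i : Fin K) (a : Fin n → Fin K) :
    Integrable (fun θ : Fin K → ℝ => max (θ i) (⨆ m, θ (a m))) P := by
  refine hInt.mono
    (((measurable_pi_apply i).max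
      (Measurable.iSup fun m => measurable_pi_apply (a m))).aestronglyMeasurable)
    (ae_of_all _ fun θ => ?_)
  rw [Real.norm_eq_abs, Real.norm_eq_abs]
  have bddA : BddAbove (Set.range fun j => |θ j|) := (Set.finite_range _).bddAbove
  refine (abs_le.2 ⟨?_, max_le ((le_abs_self _).trans (le_ciSup bddA i))
      ((abs_le.1 (abs_sup_le θ a)).2)⟩).trans (le_abs_self _)
  calc -(⨆ j, |θ j|) ≤ -|θ i| := neg_le_neg (le_ciSup bddA i)
  _ ≤ θ i := neg_abs_le _
  _ ≤ _ := le_max_left _ _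

/-- The partial derivative of the ReMax objective with respect to `π i` equals
`M · (s̄_i(π) + C(π))`. -/
theorem remax_partial_derivative
    (K M : ℕ) (hK : 1 ≤ K) (hM : 2 ≤ M)
    (P : Measure (Fin K → ℝ)) [IsProbabilityMeasure P]
    (hInt : Integrable (fun θ : Fin K → ℝ => ⨆ i, |θ i|) P)
    (π : Fin K → ℝ) (hπ0 : ∀ i, 0 ≤ π i) (hπ1 : ∑ i, π i = 1) (i : Fin K) :
    HasDerivAt (fun t : ℝ => remaxJ K M P (Function.update π i t))
      ((M : ℝ) * (remaxSbar K M P π i + remaxC K M P π)) (π i) := by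
  obtain ⟨N, rfl⟩ : ∃ N, M = N + 1 := ⟨M - 1, by omega⟩
  haveI : Nonempty (Fin K) := Fin.pos_iff_nonempty.1 (by omega)
  haveI : Nonempty (Fin N) := Fin.pos_iff_nonempty.1 (by omega)
  classical
  set c : (Fin (N+1) → Fin K) → ℝ := fun a => ∫ θ, ⨆ m, θ (a m) ∂P with hc
  have hfun : (fun t : ℝ => remaxJ K (N+1) P (Function.update π i t))
      = fun t => ∑ a : Fin (N+1) → Fin K, (∏ m, Function.update π i t (a m)) * c a := by
    funext t
    unfold remaxJ
    rw [integral_finset_sum _ (fun a _ => (integrable_sup hInt a).const_mul _)]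
    exact Finset.sum_congr rfl fun a _ => integral_const_mul _ _
  rw [hfun]
  have key : HasDerivAt
      (fun t => ∑ a : Fin (N+1) → Fin K, (∏ m, Function.update π i t (a m)) * c a)
      (∑ a : Fin (N+1) → Fin K,
        (∑ m : Fin (N+1), (∏ m' ∈ Finset.univ.erase m, π (a m'))
          * (if a m = i then (1:ℝ) else 0)) * c a)
      (π i) := by
    apply HasDerivAt.fun_sum
    intro a _
    refine HasDerivAt.mul_const ?_ (c a)
    have h := HasDerivAt.fun_finsetProd (u := (Finset.univ : Finset (Fin (N+1))))
      (f := fun m t => Function.update π i t (a m))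
      (f' := fun m => if a m = i then (1:ℝ) else 0) (x := π i) ?_
    · simpa [Function.update_eq_self, smul_eq_mul] using h
    · intro m _
      rcases eq_or_ne (a m) i with h | h
      · simpa [Function.update_apply, h] using hasDerivAt_id' (π i)
      · simpa [Function.update_apply, h] using hasDerivAt_const (π i) (π (a m))
  convert key using 1
  -- combinatorial identity
  have hm : ∀ m : Fin (N+1),
      (∑ a : Fin (N+1) → Fin K,
        if a m = i then (∏ m' ∈ Finset.univ.erase m, π (a m')) * c a else 0)
      = ∑ b : Fin N → Fin K, (∏ j, π (b j)) * ∫ θ, max (θ i) (⨆ j, θ (b j)) ∂P := by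
    intro m
    rw [← (Fin.insertNthEquiv (fun _ => Fin K) m).sum_comp
      (fun a => if a m = i then (∏ m' ∈ Finset.univ.erase m, π (a m')) * c a else 0)]
    rw [Fintype.sum_prod_type]
    simp only [Fin.insertNthEquiv, Equiv.coe_fn_mk, Fin.insertNth_apply_same]
    rw [Finset.sum_comm]
    simp only [Finset.sum_ite_eq', Finset.mem_univ, if_true]
    refine Finset.sum_congr rfl fun b _ => ?_
    have hp : (∏ m' ∈ Finset.univ.erase m, π (Fin.insertNth (α := fun _ => Fin K) m i b m')) = ∏ j, π (b j) := by
      rw [fin_prod_erase (fun m' => π (Fin.insertNth (α := fun _ => Fin K) m i b m')) m]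
      exact Finset.prod_congr rfl fun j _ => by rw [Fin.insertNth_apply_succAbove]
    have hcv : c (Fin.insertNth (α := fun _ => Fin K) m i b) = ∫ θ, max (θ i) (⨆ j, θ (b j)) ∂P := by
      have he : (fun θ : Fin K → ℝ => ⨆ m', θ (Fin.insertNth (α := fun _ => Fin K) m i b m'))
          = fun θ => max (θ i) (⨆ j, θ (b j)) := by
        funext θ
        rw [ciSup_succAbove (fun m' => θ (Fin.insertNth (α := fun _ => Fin K) m i b m')) m]
        simp [Fin.insertNth_apply_same, Fin.insertNth_apply_succAbove]
      show (∫ θ, ⨆ m', θ (Fin.insertNth (α := fun _ => Fin K) m i b m') ∂P) = _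
      rw [he]
    rw [hp, hcv]
  have h1 : ∀ b : Fin N → Fin K,
      Integrable (fun θ : Fin K → ℝ => max (θ i - ⨆ j, θ (b j)) 0) P := by
    intro b
    have he : (fun θ : Fin K → ℝ => max (θ i - ⨆ j, θ (b j)) 0)
        = fun θ => max (θ i) (⨆ j, θ (b j)) - (⨆ j, θ (b j)) := by
      funext θ
      rw [← max_sub_sub_right, sub_self]
    rw [he]
    exact (integrable_max_sup hInt i b).sub (integrable_sup hInt b)
  have hSC : remaxSbar K (N+1) P π i + remaxC K (N+1) P π
      = ∑ b : Fin N → Fin K, (∏ j, π (b j)) * ∫ θ, max (θ i) (⨆ j, θ (b j)) ∂P := by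
    unfold remaxSbar remaxC
    show (∫ θ, ∑ a : Fin N → Fin K, (∏ m, π (a m)) * max (θ i - ⨆ m, θ (a m)) 0 ∂P)
        + (∫ θ, ∑ a : Fin N → Fin K, (∏ m, π (a m)) * (⨆ m, θ (a m)) ∂P) = _
    rw [integral_finset_sum _ (fun b _ => (h1 b).const_mul _),
        integral_finset_sum _ (fun b _ => (integrable_sup hInt b).const_mul _),
        ← Finset.sum_add_distrib]
    refine Finset.sum_congr rfl fun b _ => ?_
    rw [integral_const_mul, integral_const_mul, ← mul_add,
        ← integral_add (h1 b) (integrable_sup hInt b)]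
    have he : (fun θ : Fin K → ℝ => max (θ i - ⨆ j, θ (b j)) 0 + ⨆ j, θ (b j))
        = fun θ => max (θ i) (⨆ j, θ (b j)) := by
      funext θ
      rw [← max_add_add_right, sub_add_cancel, zero_add]
    rw [he]
  rw [hSC]
  calc ((N+1 : ℕ) : ℝ) * ∑ b : Fin N → Fin K,
        (∏ j, π (b j)) * ∫ θ, max (θ i) (⨆ j, θ (b j)) ∂P
      = ∑ m : Fin (N+1), ∑ b : Fin N → Fin K,
        (∏ j, π (b j)) * ∫ θ, max (θ i) (⨆ j, θ (b j)) ∂P := by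
        rw [Finset.sum_const, Finset.card_univ, Fintype.card_fin, nsmul_eq_mul]
    _ = ∑ m : Fin (N+1), ∑ a : Fin (N+1) → Fin K,
        (if a m = i then (∏ m' ∈ Finset.univ.erase m, π (a m')) * c a else 0) := by
        exact Finset.sum_congr rfl fun m _ => (hm m).symm
    _ = ∑ a : Fin (N+1) → Fin K,
        (∑ m : Fin (N+1), (∏ m' ∈ Finset.univ.erase m, π (a m'))
          * (if a m = i then (1:ℝ) else 0)) * c a := by
        rw [Finset.sum_comm]
        refine Finset.sum_congr rfl fun a _ => ?_
        rw [Finset.sum_mul]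
        refine Finset.sum_congr rfl fun m _ => ?_
        rcases eq_or_ne (a m) i with h | h <;> simp [h]
end

section
/- Let n ≥ 1 be an integer, let ε > 0, and let μ₁, μ̂ ∈ ℝ with μ̂ ≤ μ₁ − ε. Set δ := μ₁ − ε − μ̂ ≥ 0 and define E := (1/4)·E_{θ∼N(μ̂, 1/n)}[ max(0, θ − (μ₁ − ε)) ]. Then E ≥ (1/(4√(2πn))) · (1/(3 + nδ²)) · exp(−n·δ²/2). -/
open MeasureTheory ProbabilityTheory Set Filter Real
open scoped NNReal Topology

noncomputable def phi (x : ℝ) : ℝ := Real.exp (-x^2/2) / Real.sqrt (2*Real.pi)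

lemma phi_pos (x : ℝ) : 0 < phi x := by
  unfold phi; positivity

lemma phi_nonneg (x : ℝ) : 0 ≤ phi x := (phi_pos x).le

lemma continuous_phi : Continuous phi := by
  unfold phi
  fun_prop

lemma hasDerivAt_phi (x : ℝ) : HasDerivAt phi (-x * phi x) x := by
  have h1 : HasDerivAt (fun y : ℝ => -y^2/2) (-x) x := by
    have := ((hasDerivAt_pow 2 x).neg).div_const 2
    simpa using this.congr_deriv (by ring)
  have h2 := (h1.exp).div_const (Real.sqrt (2*Real.pi))
  refine h2.congr_deriv ?_
  unfold phi
  ring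

-- master monomial bound
lemma pow_le_exp_quarter {k : ℕ} (hk : k ≤ 4) (x : ℝ) :
    |x|^k ≤ 65 * Real.exp (x^2/4) := by
  have h8 : x^2/8 + 1 ≤ Real.exp (x^2/8) := by
    have := Real.add_one_le_exp (x^2/8); linarith
  have hx4 : x^4 ≤ 64 * Real.exp (x^2/4) := by
    have hsq : (x^2/8)^2 ≤ (Real.exp (x^2/8))^2 := by
      apply pow_le_pow_left₀ (by positivity) (by nlinarith [sq_nonneg x]) 2
    have : Real.exp (x^2/8) * Real.exp (x^2/8) = Real.exp (x^2/4) := by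
      rw [← Real.exp_add]; ring_nf
    nlinarith [sq_nonneg x, Real.exp_pos (x^2/8)]
  have habs : |x|^k ≤ 1 + x^4 := by
    rcases le_total (|x|) 1 with h | h
    · have : |x|^k ≤ 1 := pow_le_one₀ (abs_nonneg x) h
      nlinarith [sq_nonneg (x^2), sq_nonneg x, sq_abs x]
    · have h1 : |x|^k ≤ |x|^4 := pow_le_pow_right₀ h hk
      have h2 : |x|^4 = x^4 := by
        rw [show (4:ℕ) = 2*2 from rfl, pow_mul, pow_mul, sq_abs]
      nlinarith
  have he : (1:ℝ) ≤ Real.exp (x^2/4) := Real.one_le_exp (by positivity)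
  nlinarith

lemma abs_pow_mul_phi_le {k : ℕ} (hk : k ≤ 4) (x : ℝ) :
    |x^k * phi x| ≤ 65 / Real.sqrt (2*Real.pi) * Real.exp (-(1/4) * x^2) := by
  rw [abs_mul, abs_of_nonneg (phi_nonneg x), abs_pow]
  have h := pow_le_exp_quarter hk x
  unfold phi
  have hs : (0:ℝ) < (Real.sqrt (2*Real.pi))⁻¹ := by positivity
  have key : |x|^k * Real.exp (-x^2/2) ≤ 65 * Real.exp (-(1/4)*x^2) := by
    have : Real.exp (x^2/4) * Real.exp (-x^2/2) = Real.exp (-(1/4)*x^2) := by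
      rw [← Real.exp_add]; ring_nf
    calc |x|^k * Real.exp (-x^2/2) ≤ 65 * Real.exp (x^2/4) * Real.exp (-x^2/2) := by
          apply mul_le_mul_of_nonneg_right h (Real.exp_nonneg _)
      _ = 65 * Real.exp (-(1/4)*x^2) := by rw [mul_assoc, this]
  calc |x|^k * (Real.exp (-x^2/2) / Real.sqrt (2*Real.pi))
      = |x|^k * Real.exp (-x^2/2) * (Real.sqrt (2*Real.pi))⁻¹ := by ring
    _ ≤ 65 * Real.exp (-(1/4)*x^2) * (Real.sqrt (2*Real.pi))⁻¹ :=
        mul_le_mul_of_nonneg_right key hs.le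
    _ = 65 / Real.sqrt (2*Real.pi) * Real.exp (-(1/4)*x^2) := by ring

lemma integrable_pow_phi {k : ℕ} (hk : k ≤ 4) :
    Integrable (fun x : ℝ => x^k * phi x) := by
  apply Integrable.mono' ((integrable_exp_neg_mul_sq (by norm_num : (0:ℝ) < 1/4)).const_mul
    (65 / Real.sqrt (2*Real.pi)))
  · exact ((continuous_pow k).mul continuous_phi).aestronglyMeasurable
  · refine ae_of_all _ fun x => ?_
    have h := abs_pow_mul_phi_le hk x
    calc ‖x^k * phi x‖ = |x^k * phi x| := rfl
      _ ≤ 65 / Real.sqrt (2*Real.pi) * Real.exp (-(1/4) * x^2) := h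

lemma integrable_phi : Integrable phi := by
  have := integrable_pow_phi (k := 0) (by norm_num)
  simpa using this

lemma tendsto_pow_phi {k : ℕ} (hk : k ≤ 4) :
    Tendsto (fun x : ℝ => x^k * phi x) atTop (𝓝 0) := by
  have hupper : Tendsto (fun x : ℝ => 65 / Real.sqrt (2*Real.pi) * Real.exp (-(1/4) * x^2))
      atTop (𝓝 0) := by
    have h1 : Tendsto (fun x : ℝ => -(1/4) * x^2) atTop atBot := by
      apply Tendsto.const_mul_atTop_of_neg (by norm_num)
      exact tendsto_pow_atTop (by norm_num)
    simpa using (Real.tendsto_exp_atBot.comp h1).const_mul (65 / Real.sqrt (2*Real.pi))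
  have hl : Tendsto (fun x : ℝ => -(65 / Real.sqrt (2*Real.pi) * Real.exp (-(1/4) * x^2)))
      atTop (𝓝 0) := by simpa using hupper.neg
  refine tendsto_of_tendsto_of_tendsto_of_le_of_le hl hupper ?_ ?_
  · intro x
    have := abs_pow_mul_phi_le hk x
    have := abs_le.mp this
    linarith [this.1]
  · intro x
    have := abs_le.mp (abs_pow_mul_phi_le hk x)
    linarith [this.2]

noncomputable def Qg (t : ℝ) : ℝ := ∫ x in Set.Ioi t, phi x

lemma Qg_nonneg (t : ℝ) : 0 ≤ Qg t :=
  setIntegral_nonneg measurableSet_Ioi fun x _ => phi_nonneg x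

lemma Qg_le_two_phi {t : ℝ} (ht : 0 ≤ t) : Qg t ≤ 2 * phi t := by
  have hb : ∀ x ∈ Ioi t, phi x ≤ 2 * phi t * Real.exp t * Real.exp (-x) := by
    intro x hx
    have hx' : t < x := hx
    have hle : -x^2/2 ≤ -t^2/2 + 1/2 + (t + -x) := by
      nlinarith [sq_nonneg (x - t - 1), mul_nonneg ht (sub_nonneg.mpr hx'.le)]
    have e1 := Real.exp_le_exp.mpr hle
    rw [Real.exp_add, Real.exp_add] at e1
    have eh : Real.exp ((1:ℝ)/2) ≤ 2 := by
      nlinarith [Real.exp_one_lt_d9, Real.exp_nonneg ((1:ℝ)/2),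
        Real.exp_add ((1:ℝ)/2) ((1:ℝ)/2), Real.exp_pos ((1:ℝ)/2)]
    have e2 : Real.exp (-x^2/2) ≤ 2 * Real.exp (-t^2/2) * Real.exp (t + -x) := by
      have hp : (0:ℝ) < Real.exp (-t^2/2) * Real.exp (t + -x) := by positivity
      calc Real.exp (-x^2/2) ≤ Real.exp (-t^2/2) * Real.exp ((1:ℝ)/2) * Real.exp (t + -x) := e1
        _ ≤ Real.exp (-t^2/2) * 2 * Real.exp (t + -x) := by
            have := mul_le_mul_of_nonneg_left eh (Real.exp_nonneg (-t^2/2))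
            exact mul_le_mul_of_nonneg_right this (Real.exp_nonneg _)
        _ = 2 * Real.exp (-t^2/2) * Real.exp (t + -x) := by ring
    have hs : (0:ℝ) < Real.sqrt (2*Real.pi) := by positivity
    unfold phi
    rw [div_le_iff₀ hs]
    have expand : 2 * (Real.exp (-t^2/2) / Real.sqrt (2*Real.pi)) * Real.exp t * Real.exp (-x)
        * Real.sqrt (2*Real.pi) = 2 * Real.exp (-t^2/2) * Real.exp (t + -x) := by
      rw [Real.exp_add]
      field_simp
    rw [expand]
    exact e2
  have hint2 : IntegrableOn (fun x => 2 * phi t * Real.exp t * Real.exp (-x)) (Ioi t) := by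
    have h0 := exp_neg_integrableOn_Ioi t (b := 1) one_pos
    have h0' : IntegrableOn (fun x : ℝ => Real.exp (-x)) (Ioi t) := by
      refine h0.congr_fun (fun x _ => by norm_num) measurableSet_Ioi
    exact h0'.const_mul _
  have h1 : Qg t ≤ ∫ x in Ioi t, 2 * phi t * Real.exp t * Real.exp (-x) :=
    setIntegral_mono_on integrable_phi.integrableOn hint2 measurableSet_Ioi hb
  have h2 : (∫ x in Ioi t, 2 * phi t * Real.exp t * Real.exp (-x))
      = 2 * phi t * Real.exp t * Real.exp (-t) := by
    rw [MeasureTheory.integral_const_mul, integral_exp_neg_Ioi]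
  rw [h2] at h1
  calc Qg t ≤ 2 * phi t * Real.exp t * Real.exp (-t) := h1
    _ = 2 * phi t := by rw [mul_assoc, ← Real.exp_add, add_neg_cancel, Real.exp_zero, mul_one]

lemma Qg_split {a b : ℝ} (hab : a ≤ b) : Qg a = (∫ x in a..b, phi x) + Qg b := by
  rw [intervalIntegral.integral_of_le hab]
  have : Ioi a = Ioc a b ∪ Ioi b := (Set.Ioc_union_Ioi_eq_Ioi hab).symm
  unfold Qg
  rw [this, setIntegral_union (Set.Ioc_disjoint_Ioi le_rfl) measurableSet_Ioi
    integrable_phi.integrableOn integrable_phi.integrableOn]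

lemma Qg_eq (t : ℝ) : Qg t = Qg 0 - ∫ x in (0:ℝ)..t, phi x := by
  rcases le_total 0 t with h | h
  · have := Qg_split h; linarith
  · have := Qg_split h
    rw [intervalIntegral.integral_symm]
    linarith

lemma hasDerivAt_Qg (t : ℝ) : HasDerivAt Qg (-(phi t)) t := by
  have h : HasDerivAt (fun u => ∫ x in (0:ℝ)..u, phi x) (phi t) t := by
    exact intervalIntegral.integral_hasDerivAt_right
      integrable_phi.intervalIntegrable
      (continuous_phi.stronglyMeasurable.stronglyMeasurableAtFilter)
      continuous_phi.continuousAt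
  have h2 : HasDerivAt (fun u => Qg 0 - ∫ x in (0:ℝ)..u, phi x) (-(phi t)) t :=
    (h.const_sub (Qg 0))
  exact h2.congr_of_eventuallyEq (Filter.Eventually.of_forall fun u => Qg_eq u)

lemma tendsto_pow_Qg {k : ℕ} (hk : k ≤ 4) :
    Tendsto (fun t : ℝ => t^k * Qg t) atTop (𝓝 0) := by
  have hub : Tendsto (fun t : ℝ => 2 * (t^k * phi t)) atTop (𝓝 0) := by
    simpa using (tendsto_pow_phi hk).const_mul 2
  refine tendsto_of_tendsto_of_tendsto_of_le_of_le'
    (tendsto_const_nhds : Tendsto (fun _ : ℝ => (0:ℝ)) atTop (𝓝 0)) hub ?_ ?_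
  · filter_upwards [eventually_ge_atTop (0:ℝ)] with t ht
    exact mul_nonneg (pow_nonneg ht k) (Qg_nonneg t)
  · filter_upwards [eventually_ge_atTop (0:ℝ)] with t ht
    have h := Qg_le_two_phi ht
    have hp : (0:ℝ) ≤ t^k := pow_nonneg ht k
    nlinarith [mul_le_mul_of_nonneg_left h hp]

-- generic helper: if f' ≤ 0 on Ioi t, f' integrable, f → 0, then f t ≥ 0
lemma nonneg_of_deriv_nonpos {f f' : ℝ → ℝ} {t : ℝ}
    (hderiv : ∀ x, HasDerivAt f (f' x) x)
    (hint : IntegrableOn f' (Set.Ioi t))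
    (hlim : Tendsto f atTop (𝓝 0))
    (hsign : ∀ x ∈ Set.Ioi t, f' x ≤ 0) : 0 ≤ f t := by
  have h := integral_Ioi_of_hasDerivAt_of_tendsto'
    (f := f) (f' := f') (a := t) (fun x _ => hderiv x) hint hlim
  have h2 : (∫ x in Set.Ioi t, f' x) ≤ 0 :=
    setIntegral_nonpos measurableSet_Ioi hsign
  rw [h] at h2
  linarith

noncomputable def Kf (t : ℝ) : ℝ := phi t - t * Qg t
noncomputable def Hf (t : ℝ) : ℝ := (t^2 + 1) * Qg t - t * phi t
noncomputable def gf (t : ℝ) : ℝ := (t^2 + 2) * phi t - t * (t^2 + 3) * Qg t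

lemma hasDerivAt_Kf (x : ℝ) : HasDerivAt Kf (-(Qg x)) x := by
  have h1 : HasDerivAt (fun y => y * Qg y) (1 * Qg x + x * -(phi x)) x :=
    (hasDerivAt_id x).mul (hasDerivAt_Qg x)
  have := (hasDerivAt_phi x).sub h1
  refine this.congr_deriv ?_
  ring

lemma hasDerivAt_Hf (x : ℝ) : HasDerivAt Hf (-2 * Kf x) x := by
  have h1 : HasDerivAt (fun y : ℝ => y^2 + 1) (2*x) x := by
    simpa using ((hasDerivAt_pow 2 x).add_const 1)
  have h2 : HasDerivAt (fun y => (y^2+1) * Qg y) ((2*x) * Qg x + (x^2+1) * -(phi x)) x :=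
    h1.mul (hasDerivAt_Qg x)
  have h3 : HasDerivAt (fun y => y * phi y) (1 * phi x + x * (-x * phi x)) x :=
    (hasDerivAt_id x).mul (hasDerivAt_phi x)
  have := h2.sub h3
  refine this.congr_deriv ?_
  unfold Kf
  ring

lemma hasDerivAt_gf (x : ℝ) : HasDerivAt gf (-3 * Hf x) x := by
  have h1 : HasDerivAt (fun y : ℝ => y^2 + 2) (2*x) x := by
    simpa using ((hasDerivAt_pow 2 x).add_const 2)
  have h2 : HasDerivAt (fun y => (y^2+2) * phi y)
      ((2*x) * phi x + (x^2+2) * (-x * phi x)) x := h1.mul (hasDerivAt_phi x)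
  have h3 : HasDerivAt (fun y : ℝ => y * (y^2 + 3)) (1 * (x^2+3) + x * (2*x)) x :=
    (hasDerivAt_id x).mul (by simpa using ((hasDerivAt_pow 2 x).add_const 3))
  have h4 : HasDerivAt (fun y => y * (y^2+3) * Qg y)
      ((1 * (x^2+3) + x * (2*x)) * Qg x + (x * (x^2+3)) * -(phi x)) x :=
    h3.mul (hasDerivAt_Qg x)
  have := h2.sub h4
  refine this.congr_deriv ?_
  unfold Hf
  ring

lemma continuous_Qg : Continuous Qg :=
  continuous_iff_continuousAt.mpr fun x => (hasDerivAt_Qg x).continuousAt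

lemma Kf_nonneg {t : ℝ} (ht : 0 ≤ t) : 0 ≤ Kf t := by
  refine nonneg_of_deriv_nonpos hasDerivAt_Kf ?_ ?_ ?_
  · refine ((integrable_phi.const_mul 2).integrableOn).mono'
      (continuous_Qg.neg.aestronglyMeasurable.restrict) ?_
    refine (ae_restrict_iff' measurableSet_Ioi).mpr (ae_of_all _ fun x hx => ?_)
    have hx0 : (0:ℝ) ≤ x := le_trans ht (le_of_lt hx)
    have h := Qg_le_two_phi hx0
    have h0 := Qg_nonneg x
    rw [Real.norm_eq_abs, abs_neg, abs_of_nonneg h0]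
    linarith
  · have h0 : Tendsto (fun x : ℝ => x^0 * phi x) atTop (𝓝 0) := tendsto_pow_phi (by norm_num)
    have h1 : Tendsto (fun x : ℝ => x^1 * Qg x) atTop (𝓝 0) := tendsto_pow_Qg (by norm_num)
    have := h0.sub h1
    simp only [pow_zero, one_mul, pow_one, sub_zero] at this
    exact this
  · exact fun x _ => neg_nonpos.mpr (Qg_nonneg x)

lemma Kf_le_phi {x : ℝ} (hx : 0 ≤ x) : Kf x ≤ phi x := by
  have := mul_nonneg hx (Qg_nonneg x)
  unfold Kf; linarith

lemma Hf_nonneg {t : ℝ} (ht : 0 ≤ t) : 0 ≤ Hf t := by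
  refine nonneg_of_deriv_nonpos hasDerivAt_Hf ?_ ?_ ?_
  · refine ((integrable_phi.const_mul 2).integrableOn).mono' ?_ ?_
    · have : Continuous fun x => -2 * Kf x := by
        unfold Kf
        exact (continuous_const.mul (continuous_phi.sub (continuous_id.mul continuous_Qg)))
      exact this.aestronglyMeasurable.restrict
    · refine (ae_restrict_iff' measurableSet_Ioi).mpr (ae_of_all _ fun x hx => ?_)
      have hx0 : (0:ℝ) ≤ x := le_trans ht (le_of_lt hx)
      have h1 := Kf_nonneg hx0
      have h2 := Kf_le_phi hx0
      rw [Real.norm_eq_abs, abs_of_nonpos (by linarith : -2 * Kf x ≤ 0)]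
      linarith
  · have heq : Hf = fun t => (t^2 * Qg t + Qg t) - t^1 * phi t := by
      funext u; unfold Hf; ring
    rw [heq]
    have h2 : Tendsto (fun x : ℝ => x^2 * Qg x) atTop (𝓝 0) := tendsto_pow_Qg (by norm_num)
    have h0 : Tendsto (fun x : ℝ => x^0 * Qg x) atTop (𝓝 0) := tendsto_pow_Qg (by norm_num)
    simp only [pow_zero, one_mul] at h0
    have h1 : Tendsto (fun x : ℝ => x^1 * phi x) atTop (𝓝 0) := tendsto_pow_phi (by norm_num)
    simpa using (h2.add h0).sub h1
  · intro x hx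
    have hx0 : (0:ℝ) ≤ x := le_trans ht (le_of_lt hx)
    have := Kf_nonneg hx0
    linarith

lemma Hf_le {x : ℝ} (hx : 0 ≤ x) : Hf x ≤ 2 * (x^2 * phi x) + 2 * phi x := by
  have hq := Qg_le_two_phi hx
  have hxphi : 0 ≤ x * phi x := mul_nonneg hx (phi_nonneg x)
  have h1 : (x^2 + 1) * Qg x ≤ (x^2 + 1) * (2 * phi x) := by
    apply mul_le_mul_of_nonneg_left hq (by positivity)
  unfold Hf
  nlinarith

lemma gf_nonneg {t : ℝ} (ht : 0 ≤ t) : 0 ≤ gf t := by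
  refine nonneg_of_deriv_nonpos hasDerivAt_gf ?_ ?_ ?_
  · have hmaj : Integrable (fun x : ℝ => 6 * (x^2 * phi x) + 6 * phi x) :=
      ((integrable_pow_phi (k := 2) (by norm_num)).const_mul 6).add
        (integrable_phi.const_mul 6)
    refine hmaj.integrableOn.mono' ?_ ?_
    · have : Continuous fun x => -3 * Hf x := by
        unfold Hf
        exact continuous_const.mul ((((continuous_pow 2).add continuous_const).mul
          continuous_Qg).sub (continuous_id.mul continuous_phi))
      exact this.aestronglyMeasurable.restrict
    · refine (ae_restrict_iff' measurableSet_Ioi).mpr (ae_of_all _ fun x hx => ?_)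
      have hx0 : (0:ℝ) ≤ x := le_trans ht (le_of_lt hx)
      have h1 := Hf_nonneg hx0
      have h2 := Hf_le hx0
      rw [Real.norm_eq_abs, abs_of_nonpos (by linarith : -3 * Hf x ≤ 0)]
      linarith
  · have heq : gf = fun t => (t^2 * phi t + 2 * phi t) - (t^3 * Qg t + 3 * (t^1 * Qg t)) := by
      funext u; unfold gf; ring
    rw [heq]
    have a2 : Tendsto (fun x : ℝ => x^2 * phi x) atTop (𝓝 0) := tendsto_pow_phi (by norm_num)
    have a0 : Tendsto (fun x : ℝ => x^0 * phi x) atTop (𝓝 0) := tendsto_pow_phi (by norm_num)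
    simp only [pow_zero, one_mul] at a0
    have b3 : Tendsto (fun x : ℝ => x^3 * Qg x) atTop (𝓝 0) := tendsto_pow_Qg (by norm_num)
    have b1 : Tendsto (fun x : ℝ => x^1 * Qg x) atTop (𝓝 0) := tendsto_pow_Qg (by norm_num)
    simpa using (a2.add (a0.const_mul 2)).sub (b3.add ((b1.const_mul 3)))
  · intro x hx
    have hx0 : (0:ℝ) ≤ x := le_trans ht (le_of_lt hx)
    have := Hf_nonneg hx0
    linarith

/-- Step B: the key Mills-ratio inequality. -/
lemma phi_div_le {t : ℝ} (ht : 0 ≤ t) : phi t / (3 + t^2) ≤ phi t - t * Qg t := by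
  have hg := gf_nonneg ht
  unfold gf at hg
  have h3 : (0:ℝ) < 3 + t^2 := by positivity
  rw [div_le_iff₀ h3]
  nlinarith [phi_nonneg t]

lemma integral_Ioi_x_phi (t : ℝ) : ∫ x in Set.Ioi t, x * phi x = phi t := by
  have hderiv : ∀ x ∈ Set.Ici t, HasDerivAt (fun y => -(phi y)) (x * phi x) x := by
    intro x _
    have := (hasDerivAt_phi x).neg
    refine this.congr_deriv ?_; ring
  have hint : IntegrableOn (fun x => x * phi x) (Set.Ioi t) := by
    have := integrable_pow_phi (k := 1) (by norm_num)
    simpa using this.integrableOn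
  have hlim : Tendsto (fun y => -(phi y)) atTop (𝓝 0) := by
    have h0 : Tendsto (fun x : ℝ => x^0 * phi x) atTop (𝓝 0) := tendsto_pow_phi (by norm_num)
    simp only [pow_zero, one_mul] at h0
    simpa using h0.neg
  have h := integral_Ioi_of_hasDerivAt_of_tendsto' hderiv hint hlim
  rw [h]; ring

lemma integral_phi_max (t : ℝ) :
    ∫ z, phi z * max 0 (z - t) = phi t - t * Qg t := by
  have h1 : (∫ z, phi z * max 0 (z - t))
      = ∫ z in Set.Ioi t, phi z * max 0 (z - t) := by
    rw [setIntegral_eq_integral_of_forall_compl_eq_zero]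
    intro x hx
    have : x ≤ t := le_of_not_gt hx
    have : max 0 (x - t) = 0 := max_eq_left (by linarith)
    rw [this, mul_zero]
  rw [h1]
  have h2 : ∫ z in Set.Ioi t, phi z * max 0 (z - t)
      = ∫ z in Set.Ioi t, (z * phi z - t * phi z) := by
    refine setIntegral_congr_fun measurableSet_Ioi fun z hz => ?_
    have : (t:ℝ) < z := hz
    rw [max_eq_right (by linarith)]
    ring
  rw [h2]
  have hint1 : IntegrableOn (fun z => z * phi z) (Set.Ioi t) := by
    have := integrable_pow_phi (k := 1) (by norm_num)
    simpa using this.integrableOn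
  have hint2 : IntegrableOn (fun z => t * phi z) (Set.Ioi t) :=
    (integrable_phi.const_mul t).integrableOn
  rw [integral_sub hint1 hint2, integral_Ioi_x_phi, MeasureTheory.integral_const_mul]
  rfl

lemma integral_gaussianReal_eq (μ : ℝ) {v : ℝ≥0} (hv : v ≠ 0) (f : ℝ → ℝ) :
    ∫ x, f x ∂(gaussianReal μ v) = ∫ x, gaussianPDFReal μ v x * f x := by
  rw [gaussianReal_of_var_ne_zero _ hv]
  have hd : gaussianPDF μ v = fun x => ((gaussianPDFReal μ v x).toNNReal : ENNReal) := by
    funext x; rfl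
  rw [hd, integral_withDensity_eq_integral_smul
    ((measurable_gaussianPDFReal μ v).real_toNNReal) f]
  congr 1
  funext x
  rw [NNReal.smul_def, smul_eq_mul, Real.coe_toNNReal _ (gaussianPDFReal_nonneg μ v x)]

lemma gaussian_cov (n : ℕ) (hn : 1 ≤ n) (μ a : ℝ) :
    (∫ x, gaussianPDFReal μ ((n:ℝ≥0))⁻¹ x * max 0 (x - a))
      = (Real.sqrt n)⁻¹ * ∫ z, phi z * max 0 (z - Real.sqrt n * (a - μ)) := by
  have hn0 : (0:ℝ) < n := by exact_mod_cast hn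
  set s : ℝ := Real.sqrt n with hs
  have hspos : 0 < s := Real.sqrt_pos.mpr hn0
  have hss : s * s = n := Real.mul_self_sqrt hn0.le
  set F : ℝ → ℝ := fun x => gaussianPDFReal μ ((n:ℝ≥0))⁻¹ x * max 0 (x - a) with hF
  set G : ℝ → ℝ := fun y => F (y + μ) with hG
  have step1 : (∫ x, F x) = ∫ y, G y :=
    (MeasureTheory.integral_add_right_eq_self F μ).symm
  have step2 : (∫ z, G (s⁻¹ * z)) = |s| • ∫ y, G y :=
    MeasureTheory.Measure.integral_comp_inv_mul_left G s
  have hpt : ∀ z, G (s⁻¹ * z) = phi z * max 0 (z - s * (a - μ)) := by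
    intro z
    have hv : ((((n:ℝ≥0))⁻¹ : ℝ≥0) : ℝ) = ((n:ℝ))⁻¹ := by
      push_cast
      ring
    have hpdf : gaussianPDFReal μ ((n:ℝ≥0))⁻¹ (s⁻¹ * z + μ) = s * phi z := by
      unfold gaussianPDFReal phi
      rw [hv]
      have e0 : (s⁻¹ * z + μ - μ) = s⁻¹ * z := by ring
      have e1 : -(s⁻¹ * z)^2 / (2 * ((n:ℝ))⁻¹) = -z^2/2 := by
        rw [← hss]
        field_simp
      have e2 : Real.sqrt (2 * Real.pi * ((n:ℝ))⁻¹) = Real.sqrt (2*Real.pi) * s⁻¹ := by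
        rw [Real.sqrt_mul (by positivity), Real.sqrt_inv, ← hs]
      rw [e0, e1, e2, mul_inv, inv_inv]
      rw [div_eq_mul_inv]
      ring
    have hmax : max 0 (s⁻¹ * z + μ - a) = s⁻¹ * max 0 (z - s * (a - μ)) := by
      have e3 : s⁻¹ * z + μ - a = s⁻¹ * (z - s * (a - μ)) := by
        field_simp
        ring
      rw [e3, mul_max_of_nonneg _ _ (by positivity : (0:ℝ) ≤ s⁻¹), mul_zero]
    rw [hG, hF]
    simp only []
    rw [hpdf, hmax]
    field_simp
  have step3 : (∫ z, G (s⁻¹ * z)) = ∫ z, phi z * max 0 (z - s * (a - μ)) := by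
    congr 1
    funext z
    exact hpt z
  rw [step1, ← smul_eq_mul]
  rw [← step3, step2, abs_of_pos hspos, smul_smul]
  rw [inv_mul_cancel₀ hspos.ne', one_smul]

/-- Lower bound on the (quarter of the) expected improvement of an underestimated arm:
if `μ̂ ≤ μ₁ − ε` and `E := (1/4)·E_{θ∼N(μ̂, 1/n)}[max(0, θ − (μ₁ − ε))]`, then with
`δ := μ₁ − ε − μ̂`,
`E ≥ (1/(4√(2πn))) · (1/(3 + nδ²)) · exp(−nδ²/2)`. -/
theorem expected_improvement_lower_bound
    (n : ℕ) (hn : 1 ≤ n) (ε : ℝ) (hε : 0 < ε) (μ₁ μhat : ℝ)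
    (hunder : μhat ≤ μ₁ - ε) :
    (1 / (4 * Real.sqrt (2 * Real.pi * n))) *
        (1 / (3 + n * (μ₁ - ε - μhat) ^ 2)) *
        Real.exp (-(n : ℝ) * (μ₁ - ε - μhat) ^ 2 / 2)
      ≤ (1 / 4) * ∫ θ, max 0 (θ - (μ₁ - ε)) ∂(gaussianReal μhat ((n : ℝ≥0))⁻¹) := by
  have hn0 : (0:ℝ) < n := by exact_mod_cast hn
  set δ : ℝ := μ₁ - ε - μhat with hδ
  have hδ0 : 0 ≤ δ := by rw [hδ]; linarith
  set s : ℝ := Real.sqrt n with hs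
  have hspos : 0 < s := Real.sqrt_pos.mpr hn0
  have hss : s * s = n := Real.mul_self_sqrt hn0.le
  set t : ℝ := s * δ with htdef
  have ht0 : 0 ≤ t := mul_nonneg hspos.le hδ0
  have ht2 : t^2 = (n:ℝ) * δ^2 := by rw [htdef, mul_pow, sq, hss]
  have hveq : ((n:ℝ≥0))⁻¹ ≠ 0 := by
    have : (n:ℝ≥0) ≠ 0 := Nat.cast_ne_zero.mpr (by omega)
    simpa using this
  have hI : (∫ θ, max 0 (θ - (μ₁ - ε)) ∂(gaussianReal μhat ((n:ℝ≥0))⁻¹))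
      = s⁻¹ * (phi t - t * Qg t) := by
    rw [integral_gaussianReal_eq μhat hveq (fun θ => max 0 (θ - (μ₁ - ε)))]
    rw [gaussian_cov n hn μhat (μ₁ - ε)]
    have had : Real.sqrt n * (μ₁ - ε - μhat) = t := by rw [htdef, hs, ← hδ]
    rw [had, integral_phi_max]
  rw [hI]
  have hsqrtn : Real.sqrt (2*Real.pi*(n:ℝ)) = Real.sqrt (2*Real.pi) * s := by
    rw [Real.sqrt_mul (by positivity)]
  have hLHS : (1 / (4 * Real.sqrt (2 * Real.pi * (n:ℝ)))) * (1 / (3 + (n:ℝ) * δ^2))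
      * Real.exp (-(n:ℝ) * δ^2 / 2) = 1/4 * (s⁻¹ * (phi t / (3 + t^2))) := by
    have e : -(n:ℝ)*δ^2/2 = -t^2/2 := by rw [ht2]; ring
    rw [e, show (n:ℝ)*δ^2 = t^2 from ht2.symm]
    unfold phi
    rw [hsqrtn]
    have h3 : (0:ℝ) < 3 + t^2 := by positivity
    have hsq : (0:ℝ) < Real.sqrt (2*Real.pi) := by positivity
    field_simp
  rw [hLHS]
  have hkey := phi_div_le ht0
  have h4 : (0:ℝ) ≤ s⁻¹ := by positivity
  have := mul_le_mul_of_nonneg_left hkey h4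
  linarith
end

section
/- Let n > 0 and let N_i, N_j ≥ n. Let θ_i and θ_j be independent Gaussian random variables with θ_i ∼ N(m_i, 1/N_i) and θ_j ∼ N(m_j, 1/N_j), where m_i ≥ m_j. Then E[max(θ_j − θ_i, 0)] ≤ 1/√(πn). -/
open MeasureTheory ProbabilityTheory
open scoped NNReal

open Real Set Filter
open scoped ENNReal Topology

lemma EI_integral_Ioi_mul_exp_neg_mul_sq {b : ℝ} (hb : 0 < b) :
    ∫ r in Ioi (0:ℝ), r * Real.exp (-b * r ^ 2) = (2 * b)⁻¹ := by
  have A : ∀ x : ℝ, HasDerivAt (fun x => -(2 * b)⁻¹ * Real.exp (-b * x ^ 2))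
      (x * Real.exp (-b * x ^ 2)) x := by
    intro x
    refine (((hasDerivAt_pow 2 x).const_mul (-b)).exp.const_mul (-(2 * b)⁻¹)).congr_deriv ?_
    field_simp
    ring
  have B : Tendsto (fun y : ℝ ↦ -(2 * b)⁻¹ * Real.exp (-b * y ^ 2)) atTop
      (𝓝 (-(2 * b)⁻¹ * 0)) := by
    refine Tendsto.const_mul _ ?_
    have h1 : Tendsto (fun y : ℝ => -b * y ^ 2) atTop atBot := by
      have := (tendsto_pow_atTop (n := 2) (by norm_num)).const_mul_atTop_of_neg
        (by linarith : -b < 0)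
      exact this
    exact Real.tendsto_exp_atBot.comp h1
  have := integral_Ioi_of_hasDerivAt_of_tendsto' (a := 0) (fun x _ => A x)
    (integrable_mul_exp_neg_mul_sq hb).integrableOn (by simpa using B)
  simpa using this

lemma EI_pdf_eq (m1 m2 : ℝ) {v1 v2 : ℝ≥0} (h1 : v1 ≠ 0) (h2 : v2 ≠ 0) (s : ℝ) :
    (fun x => gaussianPDFReal m1 v1 x * gaussianPDFReal m2 v2 (s + x))
      = fun x => ((Real.sqrt (2 * π * v1))⁻¹ * (Real.sqrt (2 * π * v2))⁻¹
          * Real.exp (-(s - (m2 - m1)) ^ 2 / (2 * ((v1:ℝ) + v2))))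
        * Real.exp (-(((v1:ℝ) + v2) / (2 * v1 * v2))
            * (x - (m1 - v1 * (s - (m2 - m1)) / ((v1:ℝ) + v2))) ^ 2) := by
  have ha : (0:ℝ) < v1 := lt_of_le_of_ne v1.2 (by exact_mod_cast Ne.symm h1)
  have hb : (0:ℝ) < v2 := lt_of_le_of_ne v2.2 (by exact_mod_cast Ne.symm h2)
  have hW : (0:ℝ) < (v1:ℝ) + v2 := by linarith
  funext x
  simp only [gaussianPDFReal]
  rw [mul_mul_mul_comm, mul_assoc ((Real.sqrt (2 * π * v1))⁻¹ * (Real.sqrt (2 * π * v2))⁻¹),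
    ← Real.exp_add, ← Real.exp_add]
  congr 1
  field_simp
  congr 1
  rw [div_eq_div_iff (by positivity) (by positivity)]
  ring

lemma EI_conv_pdf (m1 m2 : ℝ) {v1 v2 : ℝ≥0} (h1 : v1 ≠ 0) (h2 : v2 ≠ 0) (s : ℝ) :
    ∫ x, gaussianPDFReal m1 v1 x * gaussianPDFReal m2 v2 (s + x)
      = gaussianPDFReal (m2 - m1) (v1 + v2) s := by
  have ha : (0:ℝ) < v1 := lt_of_le_of_ne v1.2 (by exact_mod_cast Ne.symm h1)
  have hb : (0:ℝ) < v2 := lt_of_le_of_ne v2.2 (by exact_mod_cast Ne.symm h2)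
  have hW : (0:ℝ) < (v1:ℝ) + v2 := by linarith
  have hA : (0:ℝ) < ((v1:ℝ) + v2) / (2 * v1 * v2) := by positivity
  rw [EI_pdf_eq m1 m2 h1 h2 s]
  rw [integral_const_mul,
    integral_sub_right_eq_self
      (fun x => Real.exp (-(((v1:ℝ) + v2) / (2 * v1 * v2)) * x ^ 2))
      (m1 - v1 * (s - (m2 - m1)) / ((v1:ℝ) + v2)),
    integral_gaussian]
  have hcoe : ((v1 + v2 : ℝ≥0) : ℝ) = (v1:ℝ) + v2 := by push_cast; ring
  simp only [gaussianPDFReal, hcoe]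
  rw [show (√(2 * π * v1))⁻¹ * (√(2 * π * v2))⁻¹ * rexp (-(s - (m2 - m1)) ^ 2 / (2 * ((v1:ℝ) + v2)))
        * √(π / (((v1:ℝ) + v2) / (2 * v1 * v2)))
      = ((√(2 * π * v1))⁻¹ * (√(2 * π * v2))⁻¹ * √(π / (((v1:ℝ) + v2) / (2 * v1 * v2))))
        * rexp (-(s - (m2 - m1)) ^ 2 / (2 * ((v1:ℝ) + v2))) from by ring]
  congr 1
  rw [← Real.sqrt_inv (2 * π * v1), ← Real.sqrt_inv (2 * π * v2),
    ← Real.sqrt_mul (by positivity), ← Real.sqrt_mul (by positivity), ← Real.sqrt_inv]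
  congr 1
  field_simp

lemma EI_conv_integrable (m1 m2 : ℝ) {v1 v2 : ℝ≥0} (h1 : v1 ≠ 0) (h2 : v2 ≠ 0) (s : ℝ) :
    Integrable (fun x => gaussianPDFReal m1 v1 x * gaussianPDFReal m2 v2 (s + x)) := by
  have ha : (0:ℝ) < v1 := lt_of_le_of_ne v1.2 (by exact_mod_cast Ne.symm h1)
  have hb : (0:ℝ) < v2 := lt_of_le_of_ne v2.2 (by exact_mod_cast Ne.symm h2)
  have hA : (0:ℝ) < ((v1:ℝ) + v2) / (2 * v1 * v2) := by positivity
  rw [EI_pdf_eq m1 m2 h1 h2 s]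
  exact ((integrable_exp_neg_mul_sq hA).comp_sub_right _).const_mul _

lemma EI_conv_pdf' (m1 m2 : ℝ) {v1 v2 : ℝ≥0} (h1 : v1 ≠ 0) (h2 : v2 ≠ 0) (s : ℝ) :
    ∫⁻ x, gaussianPDF m1 v1 x * gaussianPDF m2 v2 (s + x)
      = gaussianPDF (m2 - m1) (v1 + v2) s := by
  simp only [gaussianPDF]
  have hmul : ∀ x : ℝ, ENNReal.ofReal (gaussianPDFReal m1 v1 x)
      * ENNReal.ofReal (gaussianPDFReal m2 v2 (s + x))
      = ENNReal.ofReal (gaussianPDFReal m1 v1 x * gaussianPDFReal m2 v2 (s + x)) := fun x =>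
    (ENNReal.ofReal_mul (gaussianPDFReal_nonneg _ _ _)).symm
  simp_rw [hmul]
  rw [← ofReal_integral_eq_lintegral_ofReal (EI_conv_integrable m1 m2 h1 h2 s)
      (ae_of_all _ fun x =>
        mul_nonneg (gaussianPDFReal_nonneg _ _ _) (gaussianPDFReal_nonneg _ _ _)),
    EI_conv_pdf m1 m2 h1 h2 s]

lemma EI_halfmoment {w : ℝ≥0} (hw : w ≠ 0) :
    ∫⁻ t, ENNReal.ofReal (max t 0) * gaussianPDF 0 w t
      = ENNReal.ofReal (Real.sqrt ((w:ℝ) / (2 * π))) := by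
  have hwp : (0:ℝ) < w := lt_of_le_of_ne w.2 (by exact_mod_cast Ne.symm hw)
  have hbp : (0:ℝ) < (2 * (w:ℝ))⁻¹ := by positivity
  have hpdf : ∀ t : ℝ, gaussianPDFReal 0 w t
      = (Real.sqrt (2 * π * w))⁻¹ * Real.exp (-(2 * (w:ℝ))⁻¹ * t ^ 2) := by
    intro t
    simp only [gaussianPDFReal, sub_zero]
    congr 1
    field_simp
  have hint : Integrable (fun t => max t 0 * gaussianPDFReal 0 w t) := by
    refine Integrable.mono' (((integrable_mul_exp_neg_mul_sq hbp).abs).const_mul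
      ((Real.sqrt (2 * π * w))⁻¹)) ?_ (ae_of_all _ fun t => ?_)
    · exact ((measurable_id.max measurable_const).mul
        (measurable_gaussianPDFReal 0 w)).aestronglyMeasurable
    · rw [Real.norm_eq_abs, abs_of_nonneg (mul_nonneg (le_max_right _ _)
        (gaussianPDFReal_nonneg _ _ _)), hpdf t, abs_mul]
      have h1 : max t 0 ≤ |t| := by
        rcases le_total t 0 with h | h
        · simpa [max_eq_right h] using abs_nonneg t
        · simp [max_eq_left h, abs_of_nonneg h]
      calc max t 0 * ((√(2 * π * w))⁻¹ * rexp (-(2 * (w:ℝ))⁻¹ * t ^ 2))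
          ≤ |t| * ((√(2 * π * w))⁻¹ * rexp (-(2 * (w:ℝ))⁻¹ * t ^ 2)) := by
            apply mul_le_mul_of_nonneg_right h1 (by positivity)
        _ = (√(2 * π * w))⁻¹ * (|t| * |rexp (-(2 * (w:ℝ))⁻¹ * t ^ 2)|) := by
            rw [abs_of_nonneg (Real.exp_nonneg _)]; ring
  simp only [gaussianPDF]
  have : ∀ t : ℝ, ENNReal.ofReal (max t 0) * ENNReal.ofReal (gaussianPDFReal 0 w t)
      = ENNReal.ofReal (max t 0 * gaussianPDFReal 0 w t) := fun t =>
    (ENNReal.ofReal_mul (le_max_right _ _)).symm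
  simp_rw [this]
  rw [← ofReal_integral_eq_lintegral_ofReal hint (ae_of_all _ fun t =>
    mul_nonneg (le_max_right _ _) (gaussianPDFReal_nonneg _ _ _))]
  congr 1
  rw [← setIntegral_eq_integral_of_forall_compl_eq_zero
    (s := Ioi (0:ℝ)) (fun t ht => by
      have : t ≤ 0 := by simpa using ht
      simp [max_eq_right this])]
  have hIoi : ∫ t in Ioi (0:ℝ), max t 0 * gaussianPDFReal 0 w t
      = ∫ t in Ioi (0:ℝ), (Real.sqrt (2 * π * w))⁻¹ * (t * rexp (-(2 * (w:ℝ))⁻¹ * t ^ 2)) :=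
    setIntegral_congr_fun measurableSet_Ioi (fun t ht => by
      rw [max_eq_left (le_of_lt ht), hpdf t]; ring)
  rw [hIoi, integral_const_mul, EI_integral_Ioi_mul_exp_neg_mul_sq hbp,
    show (2 * (2 * (w:ℝ))⁻¹)⁻¹ = (w:ℝ) by field_simp]
  have h1 : Real.sqrt ((w:ℝ) / (2 * π)) = Real.sqrt ((2 * π * w)⁻¹ * (w:ℝ) ^ 2) := by
    congr 1
    field_simp
  rw [h1, show ((2 * π * (w:ℝ))⁻¹ * (w:ℝ) ^ 2) = (w:ℝ) ^ 2 * (2 * π * (w:ℝ))⁻¹ by ring,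
    Real.sqrt_mul (by positivity) ((2 * π * (w:ℝ))⁻¹),
    Real.sqrt_sq (le_of_lt hwp), Real.sqrt_inv]
  ring

/-- Bound on the pairwise expected improvement for sufficiently-sampled arms:
if `θ_i ∼ N(m_i, 1/N_i)` and `θ_j ∼ N(m_j, 1/N_j)` are independent with
`N_i, N_j ≥ n > 0` and `m_i ≥ m_j`, then `E[max(θ_j − θ_i, 0)] ≤ 1/√(π n)`. -/
theorem expected_improvement_large_n_bound
    (n Ni Nj : ℝ) (hn : 0 < n) (hNi : n ≤ Ni) (hNj : n ≤ Nj)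
    (mi mj : ℝ) (hm : mj ≤ mi) :
    ∫ p : ℝ × ℝ, max (p.2 - p.1) 0
        ∂((gaussianReal mi (Ni⁻¹).toNNReal).prod (gaussianReal mj (Nj⁻¹).toNNReal))
      ≤ 1 / Real.sqrt (Real.pi * n) := by
  have hNi0 : 0 < Ni := lt_of_lt_of_le hn hNi
  have hNj0 : 0 < Nj := lt_of_lt_of_le hn hNj
  set v1 := (Ni⁻¹).toNNReal with hv1
  set v2 := (Nj⁻¹).toNNReal with hv2
  have hv1c : (v1:ℝ) = Ni⁻¹ := Real.coe_toNNReal _ (by positivity)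
  have hv2c : (v2:ℝ) = Nj⁻¹ := Real.coe_toNNReal _ (by positivity)
  have h1 : v1 ≠ 0 := by
    rw [hv1, Ne, Real.toNNReal_eq_zero, not_le]; positivity
  have h2 : v2 ≠ 0 := by
    rw [hv2, Ne, Real.toNNReal_eq_zero, not_le]; positivity
  set w := v1 + v2 with hwdef
  have hw : w ≠ 0 := fun h => h1 (by simpa using (add_eq_zero.mp h).1)
  have hμ1 : gaussianReal mi v1 = volume.withDensity (gaussianPDF mi v1) :=
    gaussianReal_of_var_ne_zero mi h1
  have hμ2 : gaussianReal mj v2 = volume.withDensity (gaussianPDF mj v2) :=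
    gaussianReal_of_var_ne_zero mj h2
  have hfm : Measurable fun p : ℝ × ℝ => max (p.2 - p.1) 0 :=
    (measurable_snd.sub measurable_fst).max measurable_const
  rw [integral_eq_lintegral_of_nonneg_ae (f := fun p : ℝ × ℝ => max (p.2 - p.1) 0)
    (ae_of_all _ fun p => le_max_right _ _) hfm.aestronglyMeasurable]
  -- the lintegral computation
  set d := mj - mi with hd
  have hL : ∫⁻ p : ℝ × ℝ, ENNReal.ofReal (max (p.2 - p.1) 0)
        ∂((gaussianReal mi v1).prod (gaussianReal mj v2))
      = ∫⁻ s, gaussianPDF d w s * ENNReal.ofReal (max s 0) := by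
    rw [lintegral_prod _ hfm.ennreal_ofReal.aemeasurable]
    have inner_eq : ∀ x : ℝ, (∫⁻ y, ENNReal.ofReal (max (y - x) 0) ∂(gaussianReal mj v2))
        = ∫⁻ s, gaussianPDF mj v2 (s + x) * ENNReal.ofReal (max s 0) := by
      intro x
      rw [hμ2, lintegral_withDensity_eq_lintegral_mul (g := fun y => ENNReal.ofReal (max (y - x) 0))
        _ (measurable_gaussianPDF _ _)
        (by fun_prop)]
      rw [← lintegral_add_right_eq_self
        (fun y => (gaussianPDF mj v2 * fun y => ENNReal.ofReal (max (y - x) 0)) y) x]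
      simp
    simp_rw [inner_eq]
    have hG : Measurable fun x : ℝ => ∫⁻ s, gaussianPDF mj v2 (s + x) * ENNReal.ofReal (max s 0) := by
      apply Measurable.lintegral_prod_right (f := fun x s =>
        gaussianPDF mj v2 (s + x) * ENNReal.ofReal (max s 0))
      exact ((measurable_gaussianPDF _ _).comp (measurable_snd.add measurable_fst)).mul
        (((measurable_snd.max measurable_const).ennreal_ofReal).comp
          (measurable_id.prodMk measurable_snd) |>.comp measurable_id)
    rw [hμ1, lintegral_withDensity_eq_lintegral_mul _ (measurable_gaussianPDF _ _) hG]
    simp only [Pi.mul_apply]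
    have hmeas2 : ∀ x : ℝ, Measurable fun s : ℝ =>
        gaussianPDF mj v2 (s + x) * ENNReal.ofReal (max s 0) := fun x =>
      ((measurable_gaussianPDF _ _).comp (measurable_id.add_const x)).mul
        ((measurable_id.max measurable_const).ennreal_ofReal)
    have pull : ∀ x : ℝ, gaussianPDF mi v1 x
        * ∫⁻ s, gaussianPDF mj v2 (s + x) * ENNReal.ofReal (max s 0)
        = ∫⁻ s, gaussianPDF mi v1 x * (gaussianPDF mj v2 (s + x) * ENNReal.ofReal (max s 0)) :=
      fun x => (lintegral_const_mul _ (hmeas2 x)).symm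
    simp_rw [pull]
    rw [lintegral_lintegral_swap]
    · congr 1
      funext s
      have : ∀ x : ℝ, gaussianPDF mi v1 x * (gaussianPDF mj v2 (s + x) * ENNReal.ofReal (max s 0))
          = (gaussianPDF mi v1 x * gaussianPDF mj v2 (s + x)) * ENNReal.ofReal (max s 0) :=
        fun x => by ring
      simp_rw [this]
      rw [lintegral_mul_const (f := fun x => gaussianPDF mi v1 x * gaussianPDF mj v2 (s + x)) _
        ((measurable_gaussianPDF _ _).mul
          ((measurable_gaussianPDF _ _).comp (measurable_const.add measurable_id)))]
      congr 1
      exact EI_conv_pdf' mi mj h1 h2 s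
    · apply Measurable.aemeasurable
      exact ((measurable_gaussianPDF _ _).comp measurable_fst).mul
        (((measurable_gaussianPDF _ _).comp (measurable_snd.add measurable_fst)).mul
          ((measurable_snd.max measurable_const).ennreal_ofReal))
  rw [hL]
  have hd0 : d ≤ 0 := by rw [hd]; linarith
  have hbound : ∫⁻ s, gaussianPDF d w s * ENNReal.ofReal (max s 0)
      ≤ ENNReal.ofReal (Real.sqrt ((w:ℝ) / (2 * π))) := by
    have step1 : ∫⁻ s, gaussianPDF d w s * ENNReal.ofReal (max s 0)
        ≤ ∫⁻ s, gaussianPDF d w s * ENNReal.ofReal (max (s - d) 0) := by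
      refine lintegral_mono fun s => ?_
      exact mul_le_mul_right (ENNReal.ofReal_le_ofReal
        (max_le_max (by simpa using sub_le_sub_left hd0 s) le_rfl)) _
    have hshift : ∀ s : ℝ, gaussianPDF d w s = gaussianPDF 0 w (s - d) := by
      intro s
      unfold gaussianPDF
      rw [gaussianPDFReal_sub, zero_add]
    have step2 : ∫⁻ s, gaussianPDF d w s * ENNReal.ofReal (max (s - d) 0)
        = ∫⁻ t, ENNReal.ofReal (max t 0) * gaussianPDF 0 w t := by
      simp_rw [hshift, sub_eq_add_neg]
      rw [lintegral_add_right_eq_self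
        (fun t => gaussianPDF 0 w t * ENNReal.ofReal (max t 0)) (-d)]
      simp_rw [mul_comm]
    calc ∫⁻ s, gaussianPDF d w s * ENNReal.ofReal (max s 0)
        ≤ ∫⁻ s, gaussianPDF d w s * ENNReal.ofReal (max (s - d) 0) := step1
      _ = ∫⁻ t, ENNReal.ofReal (max t 0) * gaussianPDF 0 w t := step2
      _ = ENNReal.ofReal (Real.sqrt ((w:ℝ) / (2 * π))) := EI_halfmoment hw
  refine le_trans (ENNReal.toReal_le_of_le_ofReal (Real.sqrt_nonneg _) hbound) ?_
  have hwle : (w:ℝ) ≤ 2 / n := by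
    have e1 : Ni⁻¹ ≤ n⁻¹ := by gcongr
    have e2 : Nj⁻¹ ≤ n⁻¹ := by gcongr
    have : (w:ℝ) = Ni⁻¹ + Nj⁻¹ := by push_cast [hwdef, hv1c, hv2c]; ring
    rw [this]
    rw [div_eq_mul_inv]
    linarith
  calc Real.sqrt ((w:ℝ) / (2 * π))
      ≤ Real.sqrt ((2 / n) / (2 * π)) := by
        apply Real.sqrt_le_sqrt
        gcongr
    _ = 1 / Real.sqrt (π * n) := by
        rw [show (2 / n) / (2 * π) = (π * n)⁻¹ by field_simp, Real.sqrt_inv, one_div]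
end

section
/- Let K ≥ 2, let θ_1, …, θ_K be independent Gaussian random variables with θ_i ∼ N(μ̂_i, 1/N_i) for integers N_i ≥ 1, and let π ∈ Δ^{K-1}. Fix ε > 0 and μ₁ ∈ ℝ, and define E := (1/4)·E[ max(θ_1 − (μ₁ − ε), 0) ]. Suppose B ⊆ {2, …, K} is a set of arms, not containing arm 1, such that μ̂_i ≤ μ₁ − ε for every i ∈ B and Σ_{i∈B} π_i ≥ 1/2. Then Σ_{i≠1} π_i · E[max(θ_1 − θ_i, 0)] ≥ E. In particular, for each i ∈ B, E[max(θ_1 − θ_i, 0)] ≥ 2E. -/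
open MeasureTheory ProbabilityTheory
open scoped NNReal

/-- The joint posterior: independent Gaussian coordinates `θ_i ∼ N(μ̂_i, 1/N_i)`. -/
noncomputable def gaussPosterior (K : ℕ) (μhat : Fin K → ℝ) (N : Fin K → ℕ) :
    Measure (Fin K → ℝ) :=
  Measure.pi fun i => gaussianReal (μhat i) ((N i : ℝ≥0))⁻¹

namespace EIAux

open scoped ENNReal

/-- Integrability of the identity under a Gaussian measure. -/
lemma integrable_id_gauss (m : ℝ) (v : ℝ≥0) :
    Integrable (fun x : ℝ => x) (gaussianReal m v) := by
  by_cases hv : v = 0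
  · subst hv
    rw [gaussianReal_zero_var]
    refine ⟨measurable_id.aestronglyMeasurable, ?_⟩
    rw [HasFiniteIntegral, lintegral_dirac' _ (by measurability)]
    exact ENNReal.coe_lt_top
  · rw [gaussianReal_of_var_ne_zero _ hv,
      integrable_withDensity_iff (measurable_gaussianPDF _ _)
        (ae_of_all _ fun _ => ENNReal.ofReal_lt_top)]
    have hv' : 0 < (v : ℝ) := by positivity
    set b : ℝ := (2 * (v : ℝ))⁻¹ with hb
    have hbpos : 0 < b := by positivity
    have h1 : Integrable (fun y : ℝ => (y + m) * Real.exp (-b * y ^ 2)) := by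
      have ha := integrable_mul_exp_neg_mul_sq hbpos
      have hc := (integrable_exp_neg_mul_sq hbpos).const_mul m
      refine (ha.add hc).congr (ae_of_all _ fun y => ?_)
      simp only [Pi.add_apply]
      ring
    have h3 : Integrable (fun x : ℝ => x * Real.exp (-b * (x - m) ^ 2)) := by
      have := h1.comp_sub_right m
      simpa using this
    have hpdf : ∀ x : ℝ, (gaussianPDF m v x).toReal
        = (Real.sqrt (2 * Real.pi * v))⁻¹ * Real.exp (-b * (x - m) ^ 2) := by
      intro x
      rw [gaussianPDF, ENNReal.toReal_ofReal (gaussianPDFReal_nonneg _ _ _), gaussianPDFReal]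
      congr 1
      rw [hb]
      field_simp
    simp only [hpdf]
    have := h3.const_mul (Real.sqrt (2 * Real.pi * v))⁻¹
    simpa [mul_comm, mul_assoc, mul_left_comm] using this

/-- Integrability of the hinge function under a Gaussian measure. -/
lemma integrable_max_sub_gauss (m c : ℝ) (v : ℝ≥0) :
    Integrable (fun x : ℝ => max (x - c) 0) (gaussianReal m v) := by
  refine Integrable.mono' ((integrable_id_gauss m v).abs.add (integrable_const |c|)) ?_
    (ae_of_all _ fun x => ?_)
  · exact ((continuous_id.sub continuous_const).max continuous_const).aestronglyMeasurable
  · rw [Real.norm_eq_abs, abs_of_nonneg (le_max_right _ _)]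
    refine max_le ?_ (add_nonneg (abs_nonneg _) (abs_nonneg _))
    calc x - c ≤ |x - c| := le_abs_self _
    _ ≤ |x| + |c| := by
        rw [sub_eq_add_neg]
        exact (abs_add_le _ _).trans (by rw [abs_neg])

/-- Half of the Gaussian mass lies below any point above the mean. -/
lemma gauss_half (m c : ℝ) {v : ℝ≥0} (hv : v ≠ 0) (hmc : m ≤ c) :
    (1 / 2 : ℝ) ≤ ((gaussianReal m v) (Set.Iic c)).toReal := by
  have hmeas1 : Measurable (fun x : ℝ => -1 * x) := by fun_prop
  have hmeas2 : Measurable (fun y : ℝ => 2 * m + y) := by fun_prop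
  have hmeasT : Measurable (fun x : ℝ => 2 * m + -1 * x) := by fun_prop
  have hmap : (gaussianReal m v).map (fun x => 2 * m + -1 * x) = gaussianReal m v := by
    have hcomp := Measure.map_map (μ := gaussianReal m v) hmeas2 hmeas1
    have hfun : ((fun y : ℝ => 2 * m + y) ∘ fun x : ℝ => -1 * x)
        = fun x : ℝ => 2 * m + -1 * x := rfl
    rw [hfun] at hcomp
    have hone : (NNReal.mk ((-1 : ℝ) ^ 2) (sq_nonneg _) : ℝ≥0) = 1 := by
      ext; norm_num
    rw [← hcomp, gaussianReal_map_const_mul, gaussianReal_map_const_add, hone, one_mul]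
    congr 1
    ring
  have hsym : (gaussianReal m v) (Set.Iic m) = (gaussianReal m v) (Set.Ici m) := by
    conv_lhs => rw [← hmap]
    rw [Measure.map_apply hmeasT measurableSet_Iic]
    congr 1
    ext x
    simp only [Set.mem_preimage, Set.mem_Iic, Set.mem_Ici]
    constructor <;> intro h <;> linarith
  have hle : (1 : ℝ≥0∞) ≤ (gaussianReal m v) (Set.Iic m) + (gaussianReal m v) (Set.Iic m) := by
    have h := measure_union_le (μ := gaussianReal m v) (Set.Iic m) (Set.Ici m)
    rw [Set.Iic_union_Ici, measure_univ, ← hsym] at h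
    exact h
  have hfin : (gaussianReal m v) (Set.Iic m) ≠ ⊤ := measure_ne_top _ _
  have h1 : (1 : ℝ) ≤ ((gaussianReal m v) (Set.Iic m)).toReal
      + ((gaussianReal m v) (Set.Iic m)).toReal := by
    have := ENNReal.toReal_mono (by finiteness) hle
    rwa [ENNReal.toReal_one, ENNReal.toReal_add hfin hfin] at this
  have hmono : (gaussianReal m v) (Set.Iic m) ≤ (gaussianReal m v) (Set.Iic c) :=
    measure_mono (Set.Iic_subset_Iic.mpr hmc)
  have h2 := ENNReal.toReal_mono (measure_ne_top _ _) hmono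
  linarith

/-- A product of integrable functions of each coordinate is integrable for the product measure. -/
lemma pi_integrable_prod {K : ℕ} (γ : Fin K → Measure ℝ) [∀ j, IsProbabilityMeasure (γ j)]
    (f : Fin K → ℝ → ℝ) (hf : ∀ j, Integrable (f j) (γ j)) :
    Integrable (fun x : Fin K → ℝ => ∏ j, f j (x j)) (Measure.pi γ) :=
  MeasureTheory.Integrable.fintype_prod_dep (E := fun _ => ℝ) (f := f) (μ := γ) hf

/-- Fubini for a product of one-variable functions over a finite product of probability
measures. -/
lemma pi_integral_prod {K : ℕ} (γ : Fin K → Measure ℝ) [∀ j, IsProbabilityMeasure (γ j)]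
    (f : Fin K → ℝ → ℝ) :
    ∫ x : Fin K → ℝ, ∏ j, f j (x j) ∂(Measure.pi γ) = ∏ j, ∫ x, f j x ∂(γ j) :=
  MeasureTheory.integral_fintype_prod_eq_prod (E := fun _ => ℝ) f (μ := γ)

/-- Integrability of a function of one coordinate. -/
lemma pi_marg_one_int {K : ℕ} (γ : Fin K → Measure ℝ) [∀ j, IsProbabilityMeasure (γ j)]
    (j : Fin K) (g : ℝ → ℝ) (hg : Integrable g (γ j)) :
    Integrable (fun x : Fin K → ℝ => g (x j)) (Measure.pi γ) := by
  classical
  have h2 : ∀ j', Integrable ((fun j' => if j' = j then g else fun _ => 1) j') (γ j') := by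
    intro j'
    by_cases h : j' = j
    · subst h; simpa using hg
    · simpa [h] using (integrable_const (1 : ℝ) : Integrable (fun _ : ℝ => (1 : ℝ)) (γ j'))
  refine (pi_integrable_prod γ _ h2).congr (ae_of_all _ fun x => ?_)
  dsimp only
  rw [Finset.prod_eq_single j (fun b _ hb => by simp [hb]) (fun h => absurd (Finset.mem_univ j) h)]
  simp

/-- Marginalization of a function of one coordinate. -/
lemma pi_marg_one {K : ℕ} (γ : Fin K → Measure ℝ) [∀ j, IsProbabilityMeasure (γ j)]
    (j : Fin K) (g : ℝ → ℝ) :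
    ∫ x : Fin K → ℝ, g (x j) ∂(Measure.pi γ) = ∫ x, g x ∂(γ j) := by
  classical
  have h1 : ∀ x : Fin K → ℝ, g (x j)
      = ∏ j', (fun j' => if j' = j then g else fun _ => (1 : ℝ)) j' (x j') := by
    intro x
    rw [Finset.prod_eq_single j (fun b _ hb => by simp [hb])
      (fun h => absurd (Finset.mem_univ j) h)]
    simp
  simp_rw [h1]
  rw [pi_integral_prod γ]
  rw [Finset.prod_eq_single j (fun b _ hb => by simp [hb, measure_univ])
    (fun h => absurd (Finset.mem_univ j) h)]
  simp

/-- Product over `Fin K` of factors which are `1` outside `{j, k}`. -/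
lemma prod_pair {K : ℕ} {j k : Fin K} (hjk : j ≠ k) (c : Fin K → ℝ)
    (hc : ∀ i, i ≠ j → i ≠ k → c i = 1) : ∏ i, c i = c j * c k := by
  classical
  have hk : k ∈ Finset.univ.erase j :=
    Finset.mem_erase.mpr ⟨Ne.symm hjk, Finset.mem_univ k⟩
  have hrest : ∏ i ∈ (Finset.univ.erase j).erase k, c i = 1 := by
    refine Finset.prod_eq_one fun i hi => ?_
    simp only [Finset.mem_erase, Finset.mem_univ, and_true] at hi
    exact hc i hi.2 hi.1
  rw [← Finset.mul_prod_erase Finset.univ c (Finset.mem_univ j),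
    ← Finset.mul_prod_erase _ c hk, hrest, mul_one]

/-- Marginalization of a product of functions of two distinct coordinates. -/
lemma pi_marg_two {K : ℕ} (γ : Fin K → Measure ℝ) [∀ j, IsProbabilityMeasure (γ j)]
    {j k : Fin K} (hjk : j ≠ k) (g h : ℝ → ℝ) (hg : Integrable g (γ j))
    (hh : Integrable h (γ k)) :
    Integrable (fun x : Fin K → ℝ => g (x j) * h (x k)) (Measure.pi γ) ∧
    ∫ x : Fin K → ℝ, g (x j) * h (x k) ∂(Measure.pi γ)
      = (∫ x, g x ∂(γ j)) * ∫ x, h x ∂(γ k) := by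
  classical
  set f : Fin K → ℝ → ℝ := fun j' => if j' = j then g else if j' = k then h else fun _ => 1
    with hfdef
  have h1 : ∀ x : Fin K → ℝ, g (x j) * h (x k) = ∏ i, f i (x i) := by
    intro x
    rw [prod_pair hjk _ (fun i hij hik => by simp [hfdef, hij, hik])]
    simp [hfdef, hjk, Ne.symm hjk]
  have h2 : ∀ i, Integrable (f i) (γ i) := by
    intro i
    by_cases hij : i = j
    · subst hij; simpa [hfdef] using hg
    · by_cases hik : i = k
      · subst hik; simpa [hfdef, hij] using hh
      · simpa [hfdef, hij, hik] using
          (integrable_const (1 : ℝ) : Integrable (fun _ : ℝ => (1 : ℝ)) (γ i))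
  constructor
  · exact (pi_integrable_prod γ f h2).congr (ae_of_all _ fun x => (h1 x).symm)
  · simp_rw [h1]
    rw [pi_integral_prod γ f,
      prod_pair hjk _ (fun i hij hik => by simp [hfdef, hij, hik, measure_univ])]
    simp [hfdef, hjk, Ne.symm hjk]

end EIAux

open EIAux in
/-- Lower bound on the expected improvement of the (underestimated) arm 1:
if the arms in `B` (not containing arm 1) all have empirical means at most `μ₁ − ε` and
carry total probability mass at least `1/2` under `π`, then the `M = 2`
posterior-averaged marginal expected improvement of arm 1 is at least
`E := (1/4)·E[max(θ_1 − (μ₁ − ε), 0)]`; in particular each arm `i ∈ B` satisfies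
`E[max(θ_1 − θ_i, 0)] ≥ 2E`. -/
theorem expected_improvement_arm1_lower_bound
    (K : ℕ) (hK : 2 ≤ K)
    (μhat : Fin K → ℝ) (N : Fin K → ℕ) (hN : ∀ i, 1 ≤ N i)
    (π : Fin K → ℝ) (hπ0 : ∀ i, 0 ≤ π i) (hπ1 : ∑ i, π i = 1)
    (ε : ℝ) (hε : 0 < ε) (μ₁ : ℝ)
    (i1 : Fin K) (hi1 : (i1 : ℕ) = 0)
    (B : Finset (Fin K)) (hB1 : i1 ∉ B)
    (hBμ : ∀ i ∈ B, μhat i ≤ μ₁ - ε)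
    (hBπ : 1 / 2 ≤ ∑ i ∈ B, π i) :
    ((1 / 4) * ∫ θ, max (θ i1 - (μ₁ - ε)) 0 ∂(gaussPosterior K μhat N)
        ≤ ∑ i ∈ Finset.univ.erase i1,
            π i * ∫ θ, max (θ i1 - θ i) 0 ∂(gaussPosterior K μhat N)) ∧
    (∀ i ∈ B,
      2 * ((1 / 4) * ∫ θ, max (θ i1 - (μ₁ - ε)) 0 ∂(gaussPosterior K μhat N))
        ≤ ∫ θ, max (θ i1 - θ i) 0 ∂(gaussPosterior K μhat N)) := by
  classical
  set c : ℝ := μ₁ - ε with hc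
  set γ : Fin K → Measure ℝ := fun j => gaussianReal (μhat j) ((N j : ℝ≥0))⁻¹ with hγ
  have hP : gaussPosterior K μhat N = Measure.pi γ := rfl
  haveI : ∀ j, IsProbabilityMeasure (γ j) := fun j => by
    rw [hγ]; infer_instance
  have hg0int : ∀ j, Integrable (fun x : ℝ => max (x - c) 0) (γ j) := fun j => by
    rw [hγ]; exact integrable_max_sub_gauss _ _ _
  have habs : ∀ j, Integrable (fun x : ℝ => |x|) (γ j) := fun j => by
    rw [hγ]; exact (integrable_id_gauss _ _).abs
  have hJI : ∫ θ, max (θ i1 - c) 0 ∂(Measure.pi γ)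
      = ∫ x, max (x - c) 0 ∂(γ i1) := pi_marg_one γ i1 (fun x => max (x - c) 0)
  set I : ℝ := ∫ x, max (x - c) 0 ∂(γ i1) with hI
  have hI0 : 0 ≤ I := integral_nonneg fun x => le_max_right _ _
  have hnn : ∀ i : Fin K, 0 ≤ ∫ θ, max (θ i1 - θ i) 0 ∂(Measure.pi γ) := fun i =>
    integral_nonneg fun θ => le_max_right _ _
  have key : ∀ i ∈ B, (1 / 2) * I ≤ ∫ θ, max (θ i1 - θ i) 0 ∂(Measure.pi γ) := by
    intro i hi
    have hne : i ≠ i1 := fun h => hB1 (h ▸ hi)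
    have hvne : ((N i : ℝ≥0))⁻¹ ≠ 0 := by
      simp only [ne_eq, inv_eq_zero, Nat.cast_eq_zero]
      exact Nat.one_le_iff_ne_zero.mp (hN i)
    have hp : (1 / 2 : ℝ) ≤ ((γ i) (Set.Iic c)).toReal := by
      rw [hγ]; exact gauss_half _ _ hvne (hBμ i hi)
    have hindint : Integrable ((Set.Iic c).indicator (fun _ => (1 : ℝ))) (γ i) :=
      (integrable_const 1).indicator measurableSet_Iic
    obtain ⟨hint2, heq2⟩ := pi_marg_two γ hne ((Set.Iic c).indicator (fun _ => (1 : ℝ)))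
      (fun x => max (x - c) 0) hindint (hg0int i1)
    have hindval : ∫ x, (Set.Iic c).indicator (fun _ => (1 : ℝ)) x ∂(γ i)
        = ((γ i) (Set.Iic c)).toReal := by
      rw [integral_indicator_const (1 : ℝ) measurableSet_Iic, smul_eq_mul, mul_one, measureReal_def]
    have htint : Integrable (fun θ : Fin K → ℝ => max (θ i1 - θ i) 0) (Measure.pi γ) := by
      refine Integrable.mono'
        ((pi_marg_one_int γ i1 _ (habs i1)).add (pi_marg_one_int γ i _ (habs i))) ?_
        (ae_of_all _ fun θ => ?_)
      · exact (((continuous_apply i1).sub (continuous_apply i)).max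
          continuous_const).aestronglyMeasurable
      · rw [Real.norm_eq_abs, abs_of_nonneg (le_max_right _ _)]
        refine max_le ?_ (add_nonneg (abs_nonneg _) (abs_nonneg _))
        calc θ i1 - θ i ≤ |θ i1 - θ i| := le_abs_self _
        _ ≤ |θ i1| + |θ i| := by
            rw [sub_eq_add_neg]
            exact (abs_add_le _ _).trans (by rw [abs_neg])
    have hmono : ∫ θ : Fin K → ℝ, (Set.Iic c).indicator (fun _ => (1 : ℝ)) (θ i)
          * max (θ i1 - c) 0 ∂(Measure.pi γ)
        ≤ ∫ θ, max (θ i1 - θ i) 0 ∂(Measure.pi γ) := by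
      refine integral_mono hint2 htint fun θ => ?_
      by_cases hθ : θ i ∈ Set.Iic c
      · rw [Set.indicator_of_mem hθ, one_mul]
        exact max_le_max (sub_le_sub_left hθ _) le_rfl
      · rw [Set.indicator_of_notMem hθ, zero_mul]
        exact le_max_right _ _
    calc (1 / 2) * I ≤ ((γ i) (Set.Iic c)).toReal * I := mul_le_mul_of_nonneg_right hp hI0
    _ = ∫ θ : Fin K → ℝ, (Set.Iic c).indicator (fun _ => (1 : ℝ)) (θ i)
          * max (θ i1 - c) 0 ∂(Measure.pi γ) := by rw [heq2, hindval, hI]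
    _ ≤ _ := hmono
  have hsub : B ⊆ Finset.univ.erase i1 := fun i hi =>
    Finset.mem_erase.mpr ⟨fun h => hB1 (h ▸ hi), Finset.mem_univ i⟩
  rw [hP, hJI]
  constructor
  · calc (1 / 4) * I = (1 / 2) * ((1 / 2) * I) := by ring
    _ ≤ (∑ i ∈ B, π i) * ((1 / 2) * I) :=
        mul_le_mul_of_nonneg_right hBπ (by positivity)
    _ = ∑ i ∈ B, π i * ((1 / 2) * I) := by rw [Finset.sum_mul]
    _ ≤ ∑ i ∈ B, π i * ∫ θ, max (θ i1 - θ i) 0 ∂(Measure.pi γ) :=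
        Finset.sum_le_sum fun i hi => mul_le_mul_of_nonneg_left (key i hi) (hπ0 i)
    _ ≤ ∑ i ∈ Finset.univ.erase i1, π i * ∫ θ, max (θ i1 - θ i) 0 ∂(Measure.pi γ) :=
        Finset.sum_le_sum_of_subset_of_nonneg hsub fun i _ _ => mul_nonneg (hπ0 i) (hnn i)
  · intro i hi
    have h := key i hi
    linarith
end

section
/- Let θ_1 and θ_j be independent Gaussian random variables with θ_1 ∼ N(μ̂_1, 1/N_1) and θ_j ∼ N(μ̂_j, 1/N_j), where N_1, N_j ≥ 1 and μ̂_1 ≥ μ̂_j. Then E[max(θ_j − θ_1, 0)] ≤ (1/√π) · exp( −(μ̂_1 − μ̂_j)² / ( 2·(1/N_1 + 1/N_j) ) ). -/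
open MeasureTheory ProbabilityTheory
open scoped NNReal

open MeasureTheory ProbabilityTheory Real Set Filter
open scoped NNReal ENNReal


lemma tail_integral (b m : ℝ) (hb : 0 < b) :
    ∫ u in Set.Ioi (0:ℝ), (u - m) * Real.exp (-b * (u - m)^2)
      = Real.exp (-b * m^2) / (2*b) := by
  have A : ∀ x : ℝ, HasDerivAt (fun x => -(2*b)⁻¹ * Real.exp (-b * (x - m)^2))
      ((x - m) * Real.exp (-b * (x - m)^2)) x := by
    intro x
    have h1 : HasDerivAt (fun x : ℝ => x - m) 1 x := (hasDerivAt_id x).sub_const m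
    have h2 : HasDerivAt (fun x : ℝ => -b * (x - m)^2) (-b * (2 * (x - m))) x := by
      simpa using ((h1.pow 2).const_mul (-b))
    have h3 := (h2.exp).const_mul (-(2*b)⁻¹)
    refine h3.congr_deriv ?_
    have hb0 : b ≠ 0 := hb.ne'
    linear_combination ((x - m) * Real.exp (-b * (x - m) ^ 2)) * mul_inv_cancel₀ hb0
  have hint : IntegrableOn (fun u : ℝ => (u - m) * Real.exp (-b * (u - m)^2))
      (Set.Ioi 0) volume := by
    have := (integrable_mul_exp_neg_mul_sq hb).comp_sub_right m
    exact this.integrableOn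
  have B : Tendsto (fun y : ℝ => -(2*b)⁻¹ * Real.exp (-b * (y - m)^2)) atTop (nhds 0) := by
    have h0 : Tendsto (fun y : ℝ => Real.exp (-b * (y - m)^2)) atTop (nhds 0) := by
      apply Real.tendsto_exp_atBot.comp
      have : Tendsto (fun y : ℝ => (y - m)^2) atTop atTop :=
        (tendsto_pow_atTop two_ne_zero).comp (tendsto_atTop_add_const_right _ _ tendsto_id)
      exact this.const_mul_atTop_of_neg (neg_lt_zero.2 hb)
    simpa using h0.const_mul (-(2*b)⁻¹)
  have := integral_Ioi_of_hasDerivAt_of_tendsto' (fun x _ => A x) hint B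
  rw [this]
  have : ((0:ℝ) - m)^2 = m^2 := by ring
  rw [this]
  field_simp
  ring

lemma gaussian_conv (a b : ℝ) (v w : ℝ≥0) (hv : v ≠ 0) (hw : w ≠ 0) (u : ℝ) :
    ∫ x, gaussianPDFReal a v x * gaussianPDFReal b w (x + u)
      = gaussianPDFReal (b - a) (v + w) u := by
  have hv' : (0:ℝ) < v := NNReal.coe_pos.mpr hv.bot_lt
  have hw' : (0:ℝ) < w := NNReal.coe_pos.mpr hw.bot_lt
  set V : ℝ := (v:ℝ) + w with hV
  have hV' : 0 < V := by positivity
  set k : ℝ := (v:ℝ) * w / V with hk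
  have hk' : 0 < k := by positivity
  set c : ℝ := (a * w + (b - u) * v) / V with hc
  have key : ∀ x : ℝ, gaussianPDFReal a v x * gaussianPDFReal b w (x + u)
      = ((Real.sqrt (2*π*v))⁻¹ * (Real.sqrt (2*π*w))⁻¹ * Real.exp (-(u-(b-a))^2/(2*V)))
          * Real.exp (-(2*k)⁻¹ * (x-c)^2) := by
    intro x
    have hexp : -(x - a)^2/(2*(v:ℝ)) + -(x + u - b)^2/(2*(w:ℝ))
        = -(u-(b-a))^2/(2*V) + -(2*k)⁻¹*(x-c)^2 := by
      rw [hc, hk, hV]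
      field_simp
      ring
    simp only [gaussianPDFReal]
    rw [mul_mul_mul_comm, ← Real.exp_add, hexp, Real.exp_add]
    ring
  simp_rw [key]
  rw [integral_const_mul]
  have hint : ∫ x : ℝ, Real.exp (-(2*k)⁻¹ * (x - c)^2)
      = Real.sqrt (π * (2*k)) := by
    rw [integral_sub_right_eq_self (fun y : ℝ => Real.exp (-(2*k)⁻¹ * y^2)) c,
      integral_gaussian]
    congr 1
    rw [div_eq_mul_inv, inv_inv]
  rw [hint]
  have hcoe : ((v + w : ℝ≥0) : ℝ) = V := by push_cast; rfl
  simp only [gaussianPDFReal, hcoe]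
  have hs : Real.sqrt (2*π*(v:ℝ)) * Real.sqrt (2*π*(w:ℝ))
      = Real.sqrt (π * (2*k)) * Real.sqrt (2*π*V) := by
    rw [← Real.sqrt_mul (by positivity), ← Real.sqrt_mul (by positivity)]
    congr 1
    rw [hk]
    field_simp
  have h1 : Real.sqrt (π * (2*k)) ≠ 0 := by positivity
  have hconst : (Real.sqrt (2*π*(v:ℝ)))⁻¹ * (Real.sqrt (2*π*(w:ℝ)))⁻¹ * Real.sqrt (π * (2*k))
      = (Real.sqrt (2*π*V))⁻¹ := by
    rw [← mul_inv, hs, mul_inv, mul_right_comm, inv_mul_cancel₀ h1, one_mul]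
  linear_combination Real.exp (-(u-(b-a))^2/(2*V)) * hconst

/-- Upper bound on `G_{j,1}`: if `θ_1 ∼ N(μ̂_1, 1/N_1)` and `θ_j ∼ N(μ̂_j, 1/N_j)` are
independent with `μ̂_1 ≥ μ̂_j`, then
`E[max(θ_j − θ_1, 0)] ≤ (1/√π) · exp(−(μ̂_1 − μ̂_j)²/(2(1/N_1 + 1/N_j)))`. -/
theorem Gj1_upper_bound
    (N1 Nj : ℕ) (hN1 : 1 ≤ N1) (hNj : 1 ≤ Nj)
    (μhat1 μhatj : ℝ) (h : μhatj ≤ μhat1) :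
    ∫ p : ℝ × ℝ, max (p.2 - p.1) 0
        ∂((gaussianReal μhat1 ((N1 : ℝ≥0))⁻¹).prod (gaussianReal μhatj ((Nj : ℝ≥0))⁻¹))
      ≤ (1 / Real.sqrt Real.pi) *
          Real.exp (-(μhat1 - μhatj) ^ 2 / (2 * (1 / (N1 : ℝ) + 1 / (Nj : ℝ)))) := by
  have hN1' : ((N1:ℝ≥0)) ≠ 0 := Nat.cast_ne_zero.mpr (by omega)
  have hNj' : ((Nj:ℝ≥0)) ≠ 0 := Nat.cast_ne_zero.mpr (by omega)
  set v1 : ℝ≥0 := ((N1 : ℝ≥0))⁻¹ with hv1def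
  set vj : ℝ≥0 := ((Nj : ℝ≥0))⁻¹ with hvjdef
  have hv1 : v1 ≠ 0 := inv_ne_zero hN1'
  have hvj : vj ≠ 0 := inv_ne_zero hNj'
  set m : ℝ := μhatj - μhat1 with hm
  have hm0 : m ≤ 0 := sub_nonpos.mpr h
  set V : ℝ≥0 := v1 + vj with hVdef
  have hVne : V ≠ 0 := by
    intro h0
    exact hv1 (by simpa using (add_eq_zero.mp h0).1)
  set Vr : ℝ := (V : ℝ) with hVrdef
  have hVr : 0 < Vr := NNReal.coe_pos.mpr hVne.bot_lt
  have hVreq : Vr = 1 / (N1:ℝ) + 1 / (Nj:ℝ) := by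
    rw [hVrdef, hVdef, hv1def, hvjdef]
    push_cast
    rw [one_div, one_div]
  have hVr2 : Vr ≤ 2 := by
    rw [hVreq]
    have h1 : 1 / (N1:ℝ) ≤ 1 := by
      rw [div_le_one (by exact_mod_cast Nat.pos_of_ne_zero (by omega))]
      exact_mod_cast hN1
    have h2 : 1 / (Nj:ℝ) ≤ 1 := by
      rw [div_le_one (by exact_mod_cast Nat.pos_of_ne_zero (by omega))]
      exact_mod_cast hNj
    linarith
  set RHS : ℝ := (1 / Real.sqrt Real.pi) *
      Real.exp (-(μhat1 - μhatj) ^ 2 / (2 * (1 / (N1 : ℝ) + 1 / (Nj : ℝ)))) with hRHS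
  have hRHS0 : 0 ≤ RHS := by positivity
  -- move to lintegral
  have hfmeas : Measurable fun p : ℝ × ℝ => max (p.2 - p.1) 0 :=
    (measurable_snd.sub measurable_fst).max measurable_const
  have hmove := integral_eq_lintegral_of_nonneg_ae
    (f := fun p : ℝ × ℝ => max (p.2 - p.1) 0)
    (μ := (gaussianReal μhat1 v1).prod (gaussianReal μhatj vj))
    (ae_of_all _ fun p => le_max_right _ _) hfmeas.aestronglyMeasurable
  rw [hmove]
  apply ENNReal.toReal_le_of_le_ofReal hRHS0
  have hgmeas : Measurable fun p : ℝ × ℝ => ENNReal.ofReal (max (p.2 - p.1) 0) :=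
    hfmeas.ennreal_ofReal
  calc ∫⁻ p : ℝ × ℝ, ENNReal.ofReal (max (p.2 - p.1) 0)
        ∂((gaussianReal μhat1 v1).prod (gaussianReal μhatj vj))
      = ∫⁻ x, ∫⁻ y, ENNReal.ofReal (max (y - x) 0) ∂(gaussianReal μhatj vj)
          ∂(gaussianReal μhat1 v1) := lintegral_prod _ hgmeas.aemeasurable
    _ = ∫⁻ x, gaussianPDF μhat1 v1 x *
          ∫⁻ u, gaussianPDF μhatj vj (u + x) * ENNReal.ofReal (max u 0) := by
        rw [gaussianReal_of_var_ne_zero _ hv1,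
          lintegral_withDensity_eq_lintegral_mul volume (measurable_gaussianPDF _ _)
            (Measurable.lintegral_prod_right (f := fun x y => ENNReal.ofReal (max (y - x) 0))
              hgmeas)]
        refine lintegral_congr fun x => ?_
        simp only [Pi.mul_apply]
        congr 1
        rw [gaussianReal_of_var_ne_zero _ hvj,
          lintegral_withDensity_eq_lintegral_mul volume (measurable_gaussianPDF _ _)
            (g := fun y => ENNReal.ofReal (max (y - x) 0)) (by fun_prop),
          ← lintegral_add_right_eq_self
            (fun y => (gaussianPDF μhatj vj * fun y => ENNReal.ofReal (max (y - x) 0)) y) x]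
        refine lintegral_congr fun u => ?_
        simp [add_sub_cancel_right]
    _ = ∫⁻ x, ∫⁻ u, gaussianPDF μhat1 v1 x *
          (gaussianPDF μhatj vj (u + x) * ENNReal.ofReal (max u 0)) := by
        refine lintegral_congr fun x => ?_
        exact (lintegral_const_mul' _ _ ENNReal.ofReal_ne_top).symm
    _ = ∫⁻ u, ∫⁻ x, gaussianPDF μhat1 v1 x *
          (gaussianPDF μhatj vj (u + x) * ENNReal.ofReal (max u 0)) := by
        refine lintegral_lintegral_swap ?_
        apply Measurable.aemeasurable
        exact ((measurable_gaussianPDF _ _).comp measurable_fst).mul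
          (((measurable_gaussianPDF _ _).comp (measurable_snd.add measurable_fst)).mul
            ((measurable_snd.max measurable_const).ennreal_ofReal))
    _ = ∫⁻ u, ENNReal.ofReal (max u 0) *
          ∫⁻ x, gaussianPDF μhat1 v1 x * gaussianPDF μhatj vj (u + x) := by
        refine lintegral_congr fun u => ?_
        rw [← lintegral_const_mul' _ _ ENNReal.ofReal_ne_top]
        refine lintegral_congr fun x => ?_
        ring
    _ = ∫⁻ u, ENNReal.ofReal (max u 0) * ENNReal.ofReal (gaussianPDFReal m V u) := by
        refine lintegral_congr fun u => ?_
        congr 1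
        have hInt : Integrable (fun x => gaussianPDFReal μhat1 v1 x *
            gaussianPDFReal μhatj vj (x + u)) := by
          refine ((integrable_gaussianPDFReal μhatj vj).comp_add_right u).bdd_mul
            (stronglyMeasurable_gaussianPDFReal μhat1 v1).aestronglyMeasurable
            (c := (Real.sqrt (2*π*(v1:ℝ)))⁻¹) (ae_of_all _ fun x => ?_)
          rw [Real.norm_of_nonneg (gaussianPDFReal_nonneg _ _ _)]
          unfold gaussianPDFReal
          apply mul_le_of_le_one_right (by positivity)
          rw [Real.exp_le_one_iff]
          apply div_nonpos_of_nonpos_of_nonneg (neg_nonpos.mpr (sq_nonneg _)) (by positivity)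
        calc ∫⁻ x, gaussianPDF μhat1 v1 x * gaussianPDF μhatj vj (u + x)
            = ∫⁻ x, ENNReal.ofReal (gaussianPDFReal μhat1 v1 x *
                gaussianPDFReal μhatj vj (x + u)) := by
              refine lintegral_congr fun x => ?_
              rw [add_comm u x]
              exact (ENNReal.ofReal_mul (gaussianPDFReal_nonneg _ _ _)).symm
          _ = ENNReal.ofReal (∫ x, gaussianPDFReal μhat1 v1 x *
                gaussianPDFReal μhatj vj (x + u)) :=
              (ofReal_integral_eq_lintegral_ofReal hInt (ae_of_all _ fun x =>
                mul_nonneg (gaussianPDFReal_nonneg _ _ _) (gaussianPDFReal_nonneg _ _ _))).symm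
          _ = ENNReal.ofReal (gaussianPDFReal m V u) := by
              rw [gaussian_conv _ _ _ _ hv1 hvj, hm, hVdef]
    _ ≤ ∫⁻ u, ENNReal.ofReal ((Set.Ioi (0:ℝ)).indicator
          (fun u => (u - m) * gaussianPDFReal m V u) u) := by
        refine lintegral_mono fun u => ?_
        rw [← ENNReal.ofReal_mul (le_max_right _ _)]
        apply ENNReal.ofReal_le_ofReal
        by_cases hu : u ∈ Set.Ioi (0:ℝ)
        · rw [Set.indicator_of_mem hu, max_eq_left (le_of_lt hu)]
          exact mul_le_mul_of_nonneg_right (by linarith) (gaussianPDFReal_nonneg _ _ _)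
        · rw [Set.indicator_of_notMem hu, max_eq_right (not_lt.1 hu)]
          simp
    _ = ∫⁻ u in Set.Ioi (0:ℝ), ENNReal.ofReal ((u - m) * gaussianPDFReal m V u) := by
        rw [← lintegral_indicator measurableSet_Ioi]
        refine lintegral_congr fun u => ?_
        by_cases hu : u ∈ Set.Ioi (0:ℝ) <;> simp [Set.indicator, hu]
    _ = ENNReal.ofReal (∫ u in Set.Ioi (0:ℝ), (u - m) * gaussianPDFReal m V u) := by
        have hpt : ∀ u : ℝ, (u - m) * gaussianPDFReal m V u
            = (Real.sqrt (2*π*Vr))⁻¹ * ((u - m) * Real.exp (-(2*Vr)⁻¹ * (u - m)^2)) := by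
          intro u
          simp only [gaussianPDFReal, ← hVrdef]
          rw [show -(u - m)^2/(2*Vr) = -(2*Vr)⁻¹ * (u - m)^2 by ring]
          ring
        have hIntOn : IntegrableOn (fun u => (u - m) * gaussianPDFReal m V u)
            (Set.Ioi (0:ℝ)) volume := by
          have hb : (0:ℝ) < (2*Vr)⁻¹ := by positivity
          have hI : Integrable (fun u : ℝ => (Real.sqrt (2*π*Vr))⁻¹ *
              ((u - m) * Real.exp (-(2*Vr)⁻¹ * (u - m)^2))) volume :=
            (((integrable_mul_exp_neg_mul_sq hb).comp_sub_right m).const_mul _)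
          exact (hI.congr (ae_of_all _ fun u => (hpt u).symm)).integrableOn
        refine (ofReal_integral_eq_lintegral_ofReal hIntOn ?_).symm
        refine (ae_restrict_iff' measurableSet_Ioi).2 (ae_of_all _ fun u hu => ?_)
        exact mul_nonneg (by simp only [Set.mem_Ioi] at hu; linarith)
          (gaussianPDFReal_nonneg _ _ _)
    _ ≤ ENNReal.ofReal RHS := by
        apply ENNReal.ofReal_le_ofReal
        have hb : (0:ℝ) < (2*Vr)⁻¹ := by positivity
        have hpt : ∀ u : ℝ, (u - m) * gaussianPDFReal m V u
            = (Real.sqrt (2*π*Vr))⁻¹ * ((u - m) * Real.exp (-(2*Vr)⁻¹ * (u - m)^2)) := by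
          intro u
          simp only [gaussianPDFReal, ← hVrdef]
          rw [show -(u - m)^2/(2*Vr) = -(2*Vr)⁻¹ * (u - m)^2 by ring]
          ring
        simp_rw [hpt]
        rw [MeasureTheory.integral_const_mul, tail_integral _ m hb]
        -- now pure real inequality
        have hexp_eq : -(μhat1 - μhatj) ^ 2 / (2 * (1 / (N1 : ℝ) + 1 / (Nj : ℝ)))
            = -(2*Vr)⁻¹ * m^2 := by
          rw [← hVreq, hm]
          have h2 : (2:ℝ)*Vr ≠ 0 := by positivity
          field_simp
          ring
        rw [hRHS, hexp_eq]
        have hcoef : (Real.sqrt (2*π*Vr))⁻¹ * (2*(2*Vr)⁻¹)⁻¹ ≤ 1 / Real.sqrt π := by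
          have h2inv : (2*(2*Vr)⁻¹)⁻¹ = Vr := by
            field_simp
          rw [h2inv, Real.sqrt_mul (by positivity : (0:ℝ) ≤ 2*π), mul_inv, mul_assoc]
          have hVrsq : (Real.sqrt Vr)⁻¹ * Vr = Real.sqrt Vr := by
            rw [inv_mul_eq_div, div_eq_iff (ne_of_gt (Real.sqrt_pos.mpr hVr))]
            exact (Real.mul_self_sqrt hVr.le).symm
          rw [hVrsq]
          have hle : Real.sqrt Vr ≤ Real.sqrt 2 := Real.sqrt_le_sqrt hVr2
          calc (Real.sqrt (2*π))⁻¹ * Real.sqrt Vr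
              ≤ (Real.sqrt (2*π))⁻¹ * Real.sqrt 2 :=
                mul_le_mul_of_nonneg_left hle (inv_nonneg.mpr (Real.sqrt_nonneg _))
            _ = 1 / Real.sqrt π := by
                rw [Real.sqrt_mul (by norm_num : (0:ℝ) ≤ 2)]
                have h2 : Real.sqrt 2 ≠ 0 := by positivity
                have hπ : Real.sqrt π ≠ 0 := by positivity
                field_simp
        calc (Real.sqrt (2*π*Vr))⁻¹ * (Real.exp (-(2*Vr)⁻¹ * m^2) / (2*(2*Vr)⁻¹))
            = ((Real.sqrt (2*π*Vr))⁻¹ * (2*(2*Vr)⁻¹)⁻¹) * Real.exp (-(2*Vr)⁻¹ * m^2) := by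
              ring
          _ ≤ (1 / Real.sqrt π) * Real.exp (-(2*Vr)⁻¹ * m^2) :=
              mul_le_mul_of_nonneg_right hcoef (Real.exp_pos _).le
end

section
/- Let θ_1, θ_j, θ_k be independent Gaussian random variables with θ_1 ∼ N(μ̂_1, 1/N_1), θ_j ∼ N(μ̂_j, 1/N_j), θ_k ∼ N(μ̂_k, 1/N_k), where N_1, N_j, N_k ≥ 1. If μ̂_1 ≥ μ̂_j and N_1 ≤ N_j, then E[max(θ_1 − θ_k, 0)] ≥ E[max(θ_j − θ_k, 0)]. Consequently, for any nonnegative weights π_k indexed by arms k ∉ {1, j}, Σ_{k∉{1,j}} π_k · ( E[max(θ_1 − θ_k, 0)] − E[max(θ_j − θ_k, 0)] ) ≥ 0. -/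
open MeasureTheory ProbabilityTheory
open scoped NNReal

/-- The pairwise expected improvement `G_{i,k} = E[max(θ_i − θ_k, 0)]`. -/
noncomputable def pairEI (K : ℕ) (μhat : Fin K → ℝ) (N : Fin K → ℕ)
    (i k : Fin K) : ℝ :=
  ∫ θ, max (θ i - θ k) 0 ∂(gaussPosterior K μhat N)

section AuxLemmas
open Real

lemma integrable_abs_gaussianReal (m : ℝ) (v : ℝ≥0) :
    Integrable (fun x => |x|) (gaussianReal m v) := by
  by_cases hv : v = 0
  · subst hv
    simp only [gaussianReal_zero_var]
    exact (integrable_const (|m|)).congr (ae_eq_dirac fun x : ℝ => |x|).symm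
  · rw [gaussianReal_of_var_ne_zero _ hv]
    rw [integrable_withDensity_iff (measurable_gaussianPDF m v)
      (ae_of_all _ fun x => ENNReal.ofReal_lt_top)]
    have hb : (0:ℝ) < (2 * (v:ℝ))⁻¹ := by positivity
    set b : ℝ := (2 * (v:ℝ))⁻¹ with hbdef
    have base : Integrable (fun y : ℝ => |y| * rexp (-b * y ^ 2)) := by
      have h1 := integrable_rpow_mul_exp_neg_mul_sq hb (s := 1) (by norm_num)
      simp_rw [Real.rpow_one] at h1
      have h2 := h1.abs
      refine h2.congr (ae_of_all _ fun x => ?_)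
      simp [abs_mul, Real.abs_exp]
    have base0 : Integrable (fun y : ℝ => rexp (-b * y ^ 2)) :=
      integrable_exp_neg_mul_sq hb
    set C : ℝ := (√(2 * π * v))⁻¹ with hC
    have hgi : Integrable (fun x : ℝ =>
        |C| * (|x - m| * rexp (-b * (x - m) ^ 2)) + (|C| * |m|) * rexp (-b * (x - m) ^ 2)) := by
      exact ((base.comp_sub_right m).const_mul _).add ((base0.comp_sub_right m).const_mul _)
    refine hgi.mono' ?_ (ae_of_all _ fun x => ?_)
    · exact (continuous_abs.measurable.mul
        (measurable_gaussianPDF m v).ennreal_toReal).aestronglyMeasurable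
    · have htr : (gaussianPDF m v x).toReal = gaussianPDFReal m v x :=
        ENNReal.toReal_ofReal (gaussianPDFReal_nonneg _ _ _)
      rw [Real.norm_eq_abs, abs_mul, abs_abs, htr]
      have hpdf : |gaussianPDFReal m v x| = |C| * rexp (-b * (x - m) ^ 2) := by
        rw [gaussianPDFReal]
        rw [abs_mul, Real.abs_exp]
        congr 2
        rw [hbdef]
        ring
      rw [hpdf]
      have h1 : |x| ≤ |x - m| + |m| := by
        calc |x| = |(x - m) + m| := by ring_nf
        _ ≤ |x - m| + |m| := abs_add_le _ _
      have h2 : (0:ℝ) ≤ |C| * rexp (-b * (x - m) ^ 2) := by positivity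
      calc |x| * (|C| * rexp (-b * (x - m) ^ 2))
          ≤ (|x - m| + |m|) * (|C| * rexp (-b * (x - m) ^ 2)) :=
            mul_le_mul_of_nonneg_right h1 h2
        _ = |C| * (|x - m| * rexp (-b * (x - m) ^ 2))
            + (|C| * |m|) * rexp (-b * (x - m) ^ 2) := by ring

lemma integrable_max_affine (a c : ℝ) (m : ℝ) (v : ℝ≥0) :
    Integrable (fun x => max (a * x + c) 0) (gaussianReal m v) := by
  have hgi : Integrable (fun x : ℝ => |a| * |x| + |c|) (gaussianReal m v) :=
    ((integrable_abs_gaussianReal m v).const_mul _).add (integrable_const _)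
  refine hgi.mono' ?_ (ae_of_all _ fun x => ?_)
  · exact (((continuous_const.mul continuous_id).add continuous_const).max
      continuous_const).aestronglyMeasurable
  · rw [Real.norm_eq_abs, abs_of_nonneg (le_max_right _ _)]
    calc max (a * x + c) 0 ≤ |a * x + c| := max_le (le_abs_self _) (abs_nonneg _)
      _ ≤ |a * x| + |c| := abs_add_le _ _
      _ = |a| * |x| + |c| := by rw [abs_mul]

lemma pair_mono {u v c c' : ℝ} (huv : |u| ≤ |v|) (hc : c' ≤ c) :
    max (u + c') 0 + max (-u + c') 0 ≤ max (v + c) 0 + max (-v + c) 0 := by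
  rcases abs_cases u with ⟨h1, h1'⟩ | ⟨h1, h1'⟩ <;>
  rcases abs_cases v with ⟨h2, h2'⟩ | ⟨h2, h2'⟩ <;>
  rcases max_cases (u + c') 0 with ⟨h3, h3'⟩ | ⟨h3, h3'⟩ <;>
  rcases max_cases (-u + c') 0 with ⟨h4, h4'⟩ | ⟨h4, h4'⟩ <;>
  rcases max_cases (v + c) 0 with ⟨h5, h5'⟩ | ⟨h5, h5'⟩ <;>
  rcases max_cases (-v + c) 0 with ⟨h6, h6'⟩ | ⟨h6, h6'⟩ <;>
  rw [h3, h4, h5, h6] <;> linarith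

lemma oneDim (y : ℝ) {μa μb : ℝ} {va vb : ℝ≥0} (hvb : vb ≠ 0) (hv : vb ≤ va)
    (hμ : μb ≤ μa) :
    ∫ x, max (x - y) 0 ∂(gaussianReal μb vb) ≤ ∫ x, max (x - y) 0 ∂(gaussianReal μa va) := by
  have hvb' : (0:ℝ) < (vb:ℝ) := by
    have := hvb; positivity
  set s : ℝ := Real.sqrt ((va:ℝ) / (vb:ℝ)) with hs
  have hs1 : 1 ≤ s := by
    rw [hs, show (1:ℝ) = Real.sqrt 1 by simp]
    apply Real.sqrt_le_sqrt
    rw [le_div_iff₀ hvb', one_mul]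
    exact_mod_cast hv
  have hs0 : 0 ≤ s := le_trans zero_le_one hs1
  set ν := gaussianReal 0 vb with hν
  have h1 : ν.map (fun x => s * x) = gaussianReal 0 va := by
    have h := gaussianReal_map_const_mul (μ := 0) (v := vb) s
    rw [mul_zero] at h
    rw [hν, h]
    congr 1
    rw [← NNReal.coe_inj]
    rw [NNReal.coe_mul, NNReal.coe_mk]
    rw [hs, Real.sq_sqrt (by positivity)]
    field_simp
  have hmapa : gaussianReal μa va = ν.map (fun x => s * x + μa) := by
    calc gaussianReal μa va = gaussianReal (0 + μa) va := by rw [zero_add]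
      _ = (gaussianReal 0 va).map (· + μa) := (gaussianReal_map_add_const μa).symm
      _ = (ν.map (fun x => s * x)).map (· + μa) := by rw [h1]
      _ = ν.map (fun x => s * x + μa) := by
          rw [Measure.map_map (measurable_add_const μa) (measurable_const_mul s)]
          rfl
  have hmapb : gaussianReal μb vb = ν.map (fun x => x + μb) := by
    have := gaussianReal_map_add_const (μ := 0) (v := vb) μb
    rw [zero_add] at this
    exact this.symm
  have hneg : ν.map (fun x => -x) = ν := by
    have h := gaussianReal_map_const_mul (μ := 0) (v := vb) (-1)
    rw [mul_zero] at h
    rw [show (fun x : ℝ => -x) = (((-1 : ℝ)) * ·) from funext fun x => (neg_one_mul x).symm]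
    rw [hν, h]
    congr 1
    rw [← NNReal.coe_inj]
    rw [NNReal.coe_mul, NNReal.coe_mk]
    norm_num
  set c : ℝ := μa - y with hc
  set c' : ℝ := μb - y with hc'
  have hcont : ∀ (p q : ℝ), Continuous fun x : ℝ => max (p * x + q) 0 := fun p q =>
    ((continuous_const.mul continuous_id).add continuous_const).max continuous_const
  have Ia : Integrable (fun x => max (s * x + c) 0) ν := integrable_max_affine s c 0 vb
  have Ia' : Integrable (fun x => max (-(s * x) + c) 0) ν := by
    have := integrable_max_affine (-s) c 0 vb
    simpa [neg_mul] using this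
  have Ib : Integrable (fun x => max (x + c') 0) ν := by
    have := integrable_max_affine 1 c' 0 vb
    simpa using this
  have Ib' : Integrable (fun x => max (-x + c') 0) ν := by
    have := integrable_max_affine (-1) c' 0 vb
    simpa using this
  have hgm : ∀ (P : Measure ℝ), AEStronglyMeasurable (fun x : ℝ => max (x - y) 0) P :=
    fun P => Continuous.aestronglyMeasurable (by fun_prop)
  have hgm' : ∀ (P : Measure ℝ), AEStronglyMeasurable (fun x : ℝ => max (x + c') 0) P :=
    fun P => Continuous.aestronglyMeasurable (by fun_prop)
  have Ea : ∫ x, max (x - y) 0 ∂(gaussianReal μa va) = ∫ x, max (s * x + c) 0 ∂ν := by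
    rw [hmapa, integral_map (by fun_prop) (hgm _)]
    congr 1 with x
    congr 1
    ring
  have Ea' : ∫ x, max (s * x + c) 0 ∂ν = ∫ x, max (-(s * x) + c) 0 ∂ν := by
    conv_lhs => rw [← hneg]
    rw [integral_map (by fun_prop) ((hcont s c).aestronglyMeasurable)]
    congr 1 with x
    congr 1
    ring
  have Eb : ∫ x, max (x - y) 0 ∂(gaussianReal μb vb) = ∫ x, max (x + c') 0 ∂ν := by
    rw [hmapb, integral_map (by fun_prop) (hgm _)]
    congr 1 with x
    congr 1
    ring
  have Eb' : ∫ x, max (x + c') 0 ∂ν = ∫ x, max (-x + c') 0 ∂ν := by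
    conv_lhs => rw [← hneg]
    rw [integral_map (by fun_prop) (hgm' _)]
  have key : ∫ x, (max (x + c') 0 + max (-x + c') 0) ∂ν
      ≤ ∫ x, (max (s * x + c) 0 + max (-(s * x) + c) 0) ∂ν := by
    refine integral_mono (Ib.add Ib') (Ia.add Ia') fun x => ?_
    refine pair_mono ?_ (by simp [hc, hc']; linarith)
    rw [abs_mul, abs_of_nonneg hs0]
    nlinarith [abs_nonneg x]
  rw [integral_add Ib Ib'] at key
  rw [integral_add Ia Ia'] at key
  rw [Ea, Eb]
  linarith [Ea', Eb']

lemma map_pair_pi {K : ℕ} (μ : Fin K → Measure ℝ) [∀ i, IsProbabilityMeasure (μ i)]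
    {i k : Fin K} (hik : i ≠ k) :
    Measure.map (fun θ : Fin K → ℝ => (θ i, θ k)) (Measure.pi μ) = (μ i).prod (μ k) := by
  refine (Measure.prod_eq fun s t hs ht => ?_).symm
  rw [Measure.map_apply ((measurable_pi_apply i).prodMk (measurable_pi_apply k)) (hs.prod ht)]
  have hpre : (fun θ : Fin K → ℝ => (θ i, θ k)) ⁻¹' (s ×ˢ t)
      = Set.pi Set.univ (fun j => if j = i then s else if j = k then t else Set.univ) := by
    ext θ
    simp only [Set.mem_preimage, Set.mem_prod, Set.mem_pi, Set.mem_univ, forall_true_left]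
    constructor
    · rintro ⟨h1, h2⟩ j
      by_cases hj : j = i
      · subst hj; simp [if_pos rfl, h1]
      · by_cases hj' : j = k
        · subst hj'; simp [if_neg hj, h2]
        · simp [if_neg hj, if_neg hj']
    · intro h
      refine ⟨?_, ?_⟩
      · have := h i; simpa using this
      · have := h k; simpa [if_neg hik.symm] using this
  rw [hpre, Measure.pi_pi]
  have : ∀ j : Fin K, j ∉ ({i, k} : Finset (Fin K)) →
      (μ j) (if j = i then s else if j = k then t else Set.univ) = 1 := by
    intro j hj
    simp only [Finset.mem_insert, Finset.mem_singleton, not_or] at hj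
    rw [if_neg hj.1, if_neg hj.2]
    exact measure_univ
  rw [← Finset.prod_subset (Finset.subset_univ ({i, k} : Finset (Fin K)))
    (fun j _ hj => this j hj)]
  rw [Finset.prod_pair hik]
  rw [if_pos rfl, if_neg hik.symm, if_pos rfl]

lemma integrable_max_sub_prod (m1 m2 : ℝ) (v1 v2 : ℝ≥0) :
    Integrable (fun p : ℝ × ℝ => max (p.1 - p.2) 0)
      ((gaussianReal m1 v1).prod (gaussianReal m2 v2)) := by
  set P := (gaussianReal m1 v1).prod (gaussianReal m2 v2) with hP
  have h1 : Integrable (fun p : ℝ × ℝ => |p.1|) P := by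
    have hmap : Measure.map Prod.fst P = gaussianReal m1 v1 := by
      rw [hP, Measure.map_fst_prod, measure_univ, one_smul]
    have hint : Integrable (fun x : ℝ => |x|) (Measure.map Prod.fst P) := by
      rw [hmap]; exact integrable_abs_gaussianReal m1 v1
    exact (integrable_map_measure continuous_abs.aestronglyMeasurable
      measurable_fst.aemeasurable).mp hint
  have h2 : Integrable (fun p : ℝ × ℝ => |p.2|) P := by
    have hmap : Measure.map Prod.snd P = gaussianReal m2 v2 := by
      rw [hP, Measure.map_snd_prod, measure_univ, one_smul]
    have hint : Integrable (fun x : ℝ => |x|) (Measure.map Prod.snd P) := by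
      rw [hmap]; exact integrable_abs_gaussianReal m2 v2
    exact (integrable_map_measure continuous_abs.aestronglyMeasurable
      measurable_snd.aemeasurable).mp hint
  refine (h1.add h2).mono' ?_ (ae_of_all _ fun p => ?_)
  · exact ((continuous_fst.sub continuous_snd).max continuous_const).aestronglyMeasurable
  · rw [Real.norm_eq_abs, abs_of_nonneg (le_max_right _ _)]
    calc max (p.1 - p.2) 0 ≤ |p.1 - p.2| := max_le (le_abs_self _) (abs_nonneg _)
      _ ≤ |p.1| + |p.2| := abs_sub _ _

lemma pairEI_eq (K : ℕ) (μhat : Fin K → ℝ) (N : Fin K → ℕ) {i k : Fin K} (hik : i ≠ k) :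
    pairEI K μhat N i k = ∫ y, ∫ x, max (x - y) 0
      ∂(gaussianReal (μhat i) ((N i : ℝ≥0))⁻¹) ∂(gaussianReal (μhat k) ((N k : ℝ≥0))⁻¹) := by
  rw [pairEI, gaussPosterior]
  have hmap := map_pair_pi (fun j => gaussianReal (μhat j) ((N j : ℝ≥0))⁻¹) hik
  have h : ∫ θ, max (θ i - θ k) 0 ∂(Measure.pi fun j => gaussianReal (μhat j) ((N j : ℝ≥0))⁻¹)
      = ∫ p : ℝ × ℝ, max (p.1 - p.2) 0
          ∂((gaussianReal (μhat i) ((N i : ℝ≥0))⁻¹).prod (gaussianReal (μhat k) ((N k : ℝ≥0))⁻¹)) := by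
    rw [← hmap, integral_map (φ := fun θ : Fin K → ℝ => (θ i, θ k))
      (f := fun p : ℝ × ℝ => max (p.1 - p.2) 0) (by fun_prop)
      (((continuous_fst.sub continuous_snd).max continuous_const).aestronglyMeasurable)]
  rw [h, integral_prod_symm _ (integrable_max_sub_prod _ _ _ _)]


end AuxLemmas

/-- Dominance: if `μ̂_1 ≥ μ̂_j` and `N_1 ≤ N_j`, then for every third arm `k`
`E[max(θ_1 − θ_k, 0)] ≥ E[max(θ_j − θ_k, 0)]`; consequently, for any nonnegative weights
`π_k` over arms `k ∉ {1, j}`, `Σ_k π_k (G_{1,k} − G_{j,k}) ≥ 0`. -/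
theorem dominance
    (K : ℕ) (μhat : Fin K → ℝ) (N : Fin K → ℕ) (hN : ∀ i, 1 ≤ N i)
    (a b : Fin K) (hab : a ≠ b)
    (hμ : μhat b ≤ μhat a) (hNab : N a ≤ N b) :
    (∀ k : Fin K, k ≠ a → k ≠ b →
      pairEI K μhat N b k ≤ pairEI K μhat N a k) ∧
    (∀ π : Fin K → ℝ, (∀ k, 0 ≤ π k) →
      0 ≤ ∑ k ∈ (Finset.univ.erase a).erase b,
            π k * (pairEI K μhat N a k - pairEI K μhat N b k)) := by

  have main : ∀ k : Fin K, k ≠ a → k ≠ b →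
      pairEI K μhat N b k ≤ pairEI K μhat N a k := by
    intro k hka hkb
    rw [pairEI_eq K μhat N (Ne.symm hkb), pairEI_eq K μhat N (Ne.symm hka)]
    have hvb : ((N b : ℝ≥0))⁻¹ ≠ 0 := by
      apply inv_ne_zero
      exact_mod_cast Nat.one_le_iff_ne_zero.mp (hN b)
    have hv : ((N b : ℝ≥0))⁻¹ ≤ ((N a : ℝ≥0))⁻¹ := by
      have ha0 : (0 : ℝ≥0) < (N a : ℝ≥0) := by
        exact_mod_cast Nat.pos_of_ne_zero (Nat.one_le_iff_ne_zero.mp (hN a))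
      have hle : ((N a : ℝ≥0)) ≤ (N b : ℝ≥0) := by exact_mod_cast hNab
      gcongr
    refine integral_mono ?_ ?_ fun y => oneDim y hvb hv hμ
    · exact (integrable_max_sub_prod (μhat b) (μhat k) _ _).integral_prod_right
    · exact (integrable_max_sub_prod (μhat a) (μhat k) _ _).integral_prod_right
  refine ⟨main, fun π hπ => Finset.sum_nonneg fun k hk => ?_⟩
  have hkb : k ≠ b := (Finset.mem_erase.mp hk).1
  have hka : k ≠ a := (Finset.mem_erase.mp (Finset.mem_erase.mp hk).2).1
  exact mul_nonneg (hπ k) (sub_nonneg.2 (main k hka hkb))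
end
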